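/- arXiv:1110.6696 — 5 statements merged into one kernel-verified Lean document; each statement's English description precedes it below -/
import Mathlib

section
/- There exists an absolute constant C > 0 with the following property: for every bounded function V : ℤ → ℂ and all positive integers H, N with H ≤ N, one has ∑_{(m,k) ∈ X(N)} |V(m − k)| / |m² − k²| ≤ C · ( sup_{|j| ≥ H} |V(j)| + (H/N) · sup_{j ∈ ℤ} |V(j)| ), where X(N) = {(m, k) ∈ ℤ × ℤ : (|m| ≤ N and |k| > N) or (|m| > N and |k| ≤ N)}. -/
set_option maxHeartbeats 1000000

open Finset

namespace Stmt10Aux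



lemma invsq_tele (N : ℕ) (hN : 0 < N) :
    ∀ M : ℤ, (N:ℤ) ≤ M → ∑ x ∈ Finset.Ioc (N:ℤ) M, ((x:ℝ)^2)⁻¹ ≤ (N:ℝ)⁻¹ - (M:ℝ)⁻¹ := by
  refine Int.le_induction ?_ ?_
  · simp
  · intro M hM ih
    have hIoc : Finset.Ioc (N:ℤ) (M+1) = insert (M+1) (Finset.Ioc (N:ℤ) M) := by
      ext x; simp only [Finset.mem_Ioc, Finset.mem_insert]; omega
    rw [hIoc, Finset.sum_insert (by simp)]
    have hMZ : (1:ℤ) ≤ M := le_trans (by exact_mod_cast hN) hM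
    have hMR : (1:ℝ) ≤ (M:ℝ) := by exact_mod_cast hMZ
    have heq : (M:ℝ)⁻¹ - ((M:ℝ)+1)⁻¹ = ((M:ℝ)*((M:ℝ)+1))⁻¹ := by
      field_simp
      ring
    have key : (((M:ℝ)+1)^2)⁻¹ ≤ (M:ℝ)⁻¹ - ((M:ℝ)+1)⁻¹ := by
      rw [heq]
      exact inv_anti₀ (by positivity) (by nlinarith)
    push_cast
    linarith [ih]

lemma invsq_sum (N : ℕ) (hN : 0 < N) (u : Finset ℤ) (hu : ∀ x ∈ u, (N:ℤ) < x) :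
    ∑ x ∈ u, ((x:ℝ)^2)⁻¹ ≤ (N:ℝ)⁻¹ := by
  rcases u.eq_empty_or_nonempty with rfl | hne
  · simp
  · have hNm : (N:ℤ) ≤ u.max' hne := le_of_lt (hu _ (u.max'_mem hne))
    have hsub : u ⊆ Finset.Ioc (N:ℤ) (u.max' hne) := fun x hx => by
      simp only [Finset.mem_Ioc]; exact ⟨hu x hx, Finset.le_max' u x hx⟩
    calc ∑ x ∈ u, ((x:ℝ)^2)⁻¹
        ≤ ∑ x ∈ Finset.Ioc (N:ℤ) (u.max' hne), ((x:ℝ)^2)⁻¹ :=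
          Finset.sum_le_sum_of_subset_of_nonneg hsub (by intros; positivity)
      _ ≤ (N:ℝ)⁻¹ - ((u.max' hne : ℤ):ℝ)⁻¹ := invsq_tele N hN _ hNm
      _ ≤ (N:ℝ)⁻¹ := by
          have h0 : (0:ℤ) < u.max' hne := lt_of_le_of_lt (by positivity) (hu _ (u.max'_mem hne))
          have : (0:ℝ) ≤ ((u.max' hne : ℤ):ℝ)⁻¹ := by
            have : (0:ℝ) < ((u.max' hne : ℤ):ℝ) := by exact_mod_cast h0
            positivity
          linarith

lemma mem4 (x y c1 c2 : ℤ) (ha : |x| ⊔ |y| = c1) (hb : |x| ⊓ |y| = c2) :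
    x = c1 ∨ x = -c1 ∨ x = c2 ∨ x = -c2 := by
  rcases le_total |x| |y| with h|h
  · rw [min_eq_left h] at hb
    rcases abs_cases x with ⟨e,-⟩|⟨e,-⟩ <;> rw [e] at hb <;> omega
  · rw [max_eq_left h] at ha
    rcases abs_cases x with ⟨e,-⟩|⟨e,-⟩ <;> rw [e] at ha <;> omega

lemma mem6 (x y c d : ℤ) (ha : |x| ⊔ |y| = c) (hd : |x - y| = d) :
    x = c ∨ x = -c ∨ x = c + d ∨ x = c - d ∨ x = -c + d ∨ x = -c - d := by
  have h := max_choice |x| |y|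
  rw [ha] at h
  rcases h with h|h
  · rcases abs_cases x with ⟨e,-⟩|⟨e,-⟩ <;> rw [e] at h <;> omega
  · rcases abs_cases y with ⟨e,-⟩|⟨e,-⟩ <;> rw [e] at h <;>
      rcases abs_cases (x - y) with ⟨e2,-⟩|⟨e2,-⟩ <;> rw [e2] at hd <;> omega

lemma card4 (a b c d : ℤ) : ({a,b,c,d} : Finset ℤ).card ≤ 4 :=
  (Finset.card_insert_le _ _).trans (Nat.succ_le_succ ((Finset.card_insert_le _ _).trans
    (Nat.succ_le_succ ((Finset.card_insert_le _ _).trans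
      (Nat.succ_le_succ (le_of_eq (Finset.card_singleton _)))))))

lemma card6 (a b c d e f : ℤ) : ({a,b,c,d,e,f} : Finset ℤ).card ≤ 6 :=
  (Finset.card_insert_le _ _).trans (Nat.succ_le_succ ((Finset.card_insert_le _ _).trans
    (Nat.succ_le_succ ((Finset.card_insert_le _ _).trans (Nat.succ_le_succ
      ((Finset.card_insert_le _ _).trans (Nat.succ_le_succ ((Finset.card_insert_le _ _).trans
        (Nat.succ_le_succ (le_of_eq (Finset.card_singleton _)))))))))))


noncomputable def G (N : ℕ) (q : ℤ × ℤ) : ℝ :=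
  if 1 ≤ q.1 ∧ 0 ≤ q.2 ∧ q.2 ≤ (N:ℤ) then (((q.1 + q.2) * (2*(N:ℤ) + q.1 - q.2) : ℤ) : ℝ)⁻¹ else 0

lemma G_nonneg (N : ℕ) (q : ℤ × ℤ) : 0 ≤ G N q := by
  unfold G
  split
  · rename_i h
    have hz : (0:ℤ) < (q.1 + q.2) * (2*(N:ℤ) + q.1 - q.2) :=
      mul_pos (by omega) (by omega)
    have : (0:ℝ) < (((q.1 + q.2) * (2*(N:ℤ) + q.1 - q.2) : ℤ) : ℝ) := by exact_mod_cast hz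
    positivity
  · exact le_refl _


lemma Gsum (N : ℕ) (hN : 0 < N) (t : Finset (ℤ × ℤ)) : ∑ q ∈ t, G N q ≤ 3 := by
  classical
  have hsupp : ∀ q ∈ t, G N q ≠ 0 → (1 ≤ q.1 ∧ 0 ≤ q.2 ∧ q.2 ≤ (N:ℤ)) := by
    intro q _ hq
    by_contra h
    exact hq (by unfold G; rw [if_neg h])
  rw [← Finset.sum_filter_of_ne hsupp]
  set t' := t.filter (fun q => 1 ≤ q.1 ∧ 0 ≤ q.2 ∧ q.2 ≤ (N:ℤ)) with ht'
  have hmem : ∀ q ∈ t', 1 ≤ q.1 ∧ 0 ≤ q.2 ∧ q.2 ≤ (N:ℤ) := by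
    intro q hq; exact (Finset.mem_filter.mp hq).2
  rw [← Finset.sum_filter_add_sum_filter_not t' (fun q => q.1 + q.2 ≤ (N:ℤ))]
  have part1 : ∑ q ∈ t'.filter (fun q => q.1 + q.2 ≤ (N:ℤ)), G N q ≤ 1 := by
    set t1 := t'.filter (fun q => q.1 + q.2 ≤ (N:ℤ)) with ht1
    have hmem1 : ∀ q ∈ t1, 1 ≤ q.1 ∧ 0 ≤ q.2 ∧ q.2 ≤ (N:ℤ) ∧ q.1 + q.2 ≤ (N:ℤ) := by
      intro q hq
      have h1 := Finset.mem_filter.mp hq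
      have h2 := hmem q h1.1
      exact ⟨h2.1, h2.2.1, h2.2.2, h1.2⟩
    set h1 : ℤ → ℝ := fun x => if 1 ≤ x ∧ x ≤ (N:ℤ) then ((x * (N:ℤ) : ℤ) : ℝ)⁻¹ else 0 with hh1
    have hpoint : ∀ q ∈ t1, G N q ≤ h1 (q.1 + q.2) := by
      intro q hq
      obtain ⟨ha, hb0, hbN, hab⟩ := hmem1 q hq
      unfold G
      rw [if_pos ⟨ha, hb0, hbN⟩]
      simp only [hh1]
      rw [if_pos ⟨by omega, hab⟩]
      have hz1 : (0:ℤ) < (q.1 + q.2) * (N:ℤ) := mul_pos (by omega) (by exact_mod_cast hN)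
      have hle : ((q.1 + q.2) * (N:ℤ)) ≤ (q.1 + q.2) * (2*(N:ℤ) + q.1 - q.2) :=
        mul_le_mul_of_nonneg_left (by omega) (by omega)
      apply inv_anti₀
      · exact_mod_cast hz1
      · exact_mod_cast hle
    calc ∑ q ∈ t1, G N q ≤ ∑ q ∈ t1, h1 (q.1 + q.2) := Finset.sum_le_sum hpoint
      _ = ∑ x ∈ t1.image (fun q : ℤ × ℤ => q.1 + q.2), (t1.filter (fun q => q.1 + q.2 = x)).card • h1 x :=
          Finset.sum_comp h1 (fun q : ℤ × ℤ => q.1 + q.2)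
      _ ≤ ∑ x ∈ t1.image (fun q : ℤ × ℤ => q.1 + q.2), (if 1 ≤ x ∧ x ≤ (N:ℤ) then ((N:ℝ))⁻¹ else 0) := by
          apply Finset.sum_le_sum
          intro x hx
          by_cases hcond : 1 ≤ x ∧ x ≤ (N:ℤ)
          · rw [if_pos hcond]
            have hcard : (t1.filter (fun q => q.1 + q.2 = x)).card ≤ x.toNat := by
              have := Finset.card_le_card_of_injOn (f := Prod.fst)
                (s := t1.filter (fun q => q.1 + q.2 = x)) (t := Finset.Icc 1 x)
                (by
                  intro q hq
                  have h2 := Finset.mem_filter.mp hq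
                  have h3 := hmem1 q h2.1
                  simp only [Finset.coe_Icc, Set.mem_Icc, Finset.mem_coe, Finset.mem_Icc]
                  omega)
                (by
                  intro q hq r hr hqr
                  have h2 := (Finset.mem_filter.mp (Finset.mem_coe.mp hq)).2
                  have h3 := (Finset.mem_filter.mp (Finset.mem_coe.mp hr)).2
                  exact Prod.ext hqr (by omega))
              rwa [Int.card_Icc, show x + 1 - 1 = x by ring] at this
            have hval : h1 x = ((x:ℝ) * (N:ℝ))⁻¹ := by
              simp only [hh1]; rw [if_pos hcond]; push_cast; ring_nf
            have hxpos : (0:ℝ) < (x:ℝ) := by exact_mod_cast hcond.1.trans_lt' (by norm_num)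
            have hNpos : (0:ℝ) < (N:ℝ) := by exact_mod_cast hN
            rw [hval, nsmul_eq_mul]
            calc ((t1.filter (fun q => q.1 + q.2 = x)).card : ℝ) * ((x:ℝ) * (N:ℝ))⁻¹
                ≤ (x.toNat : ℝ) * ((x:ℝ) * (N:ℝ))⁻¹ := by
                  apply mul_le_mul_of_nonneg_right _ (by positivity)
                  exact_mod_cast hcard
              _ = ((N:ℝ))⁻¹ := by
                  rw [show ((x.toNat : ℕ):ℝ) = (x:ℝ) from by exact_mod_cast Int.toNat_of_nonneg (by omega : (0:ℤ) ≤ x)]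
                  field_simp
          · rw [if_neg hcond]
            have : h1 x = 0 := by simp only [hh1]; rw [if_neg hcond]
            rw [this, smul_zero]
      _ ≤ 1 := by
          rw [Finset.sum_ite, Finset.sum_const, Finset.sum_const, smul_zero, add_zero]
          have hsub : (t1.image (fun q : ℤ × ℤ => q.1 + q.2)).filter (fun x => 1 ≤ x ∧ x ≤ (N:ℤ)) ⊆
              Finset.Icc 1 (N:ℤ) := by
            intro x hx
            have := (Finset.mem_filter.mp hx).2
            simp only [Finset.mem_Icc]; omega
          have hcard := Finset.card_le_card hsub
          rw [Int.card_Icc] at hcard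
          have hNpos : (0:ℝ) < (N:ℝ) := by exact_mod_cast hN
          rw [nsmul_eq_mul]
          calc (((t1.image (fun q : ℤ × ℤ => q.1 + q.2)).filter (fun x => 1 ≤ x ∧ x ≤ (N:ℤ))).card : ℝ) * ((N:ℝ))⁻¹
              ≤ (N:ℝ) * ((N:ℝ))⁻¹ := by
                apply mul_le_mul_of_nonneg_right _ (by positivity)
                have : (((N:ℤ) + 1 - 1).toNat : ℝ) = (N:ℝ) := by
                  rw [show (N:ℤ) + 1 - 1 = (N:ℤ) by ring]; simp
                rw [← this]; exact_mod_cast hcard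
            _ = 1 := by field_simp
  have part2 : ∑ q ∈ t'.filter (fun q => ¬ q.1 + q.2 ≤ (N:ℤ)), G N q ≤ 2 := by
    set t2 := t'.filter (fun q => ¬ q.1 + q.2 ≤ (N:ℤ)) with ht2
    have hmem2 : ∀ q ∈ t2, 1 ≤ q.1 ∧ 0 ≤ q.2 ∧ q.2 ≤ (N:ℤ) ∧ (N:ℤ) < q.1 + q.2 := by
      intro q hq
      have h1 := Finset.mem_filter.mp hq
      have h2 := hmem q h1.1
      have := h1.2
      exact ⟨h2.1, h2.2.1, h2.2.2, by omega⟩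
    set h2 : ℤ → ℝ := fun x => if (N:ℤ) < x then (((x:ℝ))^2)⁻¹ else 0 with hh2
    have hpoint : ∀ q ∈ t2, G N q ≤ h2 (q.1 + q.2) := by
      intro q hq
      obtain ⟨ha, hb0, hbN, hab⟩ := hmem2 q hq
      unfold G
      rw [if_pos ⟨ha, hb0, hbN⟩]
      simp only [hh2]
      rw [if_pos hab]
      have hz1 : (0:ℤ) < (q.1 + q.2) * (q.1 + q.2) := mul_pos (by omega) (by omega)
      have hle : ((q.1 + q.2) * (q.1 + q.2)) ≤ (q.1 + q.2) * (2*(N:ℤ) + q.1 - q.2) :=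
        mul_le_mul_of_nonneg_left (by omega) (by omega)
      have hcast : ((q.1 + q.2 : ℤ):ℝ)^2 = (((q.1+q.2) * (q.1+q.2) : ℤ) : ℝ) := by push_cast; ring
      rw [hcast]
      exact inv_anti₀ (by exact_mod_cast hz1) (by exact_mod_cast hle)
    calc ∑ q ∈ t2, G N q ≤ ∑ q ∈ t2, h2 (q.1 + q.2) := Finset.sum_le_sum hpoint
      _ = ∑ x ∈ t2.image (fun q : ℤ × ℤ => q.1 + q.2), (t2.filter (fun q => q.1 + q.2 = x)).card • h2 x :=
          Finset.sum_comp h2 (fun q : ℤ × ℤ => q.1 + q.2)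
      _ ≤ ∑ x ∈ t2.image (fun q : ℤ × ℤ => q.1 + q.2), ((N:ℝ) + 1) * h2 x := by
          apply Finset.sum_le_sum
          intro x hx
          have hcard : (t2.filter (fun q => q.1 + q.2 = x)).card ≤ N + 1 := by
            have := Finset.card_le_card_of_injOn (f := Prod.snd)
              (s := t2.filter (fun q => q.1 + q.2 = x)) (t := Finset.Icc 0 (N:ℤ))
              (by
                intro q hq
                have hq2 := Finset.mem_filter.mp hq
                have h3 := hmem2 q hq2.1
                simp only [Finset.coe_Icc, Set.mem_Icc, Finset.mem_coe, Finset.mem_Icc]; omega)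
              (by
                intro q hq r hr hqr
                have hq2 := (Finset.mem_filter.mp (Finset.mem_coe.mp hq)).2
                have hr2 := (Finset.mem_filter.mp (Finset.mem_coe.mp hr)).2
                exact Prod.ext (by omega) hqr)
            rwa [Int.card_Icc, show ((N:ℤ) + 1 - 0).toNat = N + 1 by omega] at this
          have hnn : 0 ≤ h2 x := by
            simp only [hh2]; split
            · rename_i hx2
              have : (0:ℝ) < (x:ℝ) := by
                have : (0:ℤ) < x := by omega
                exact_mod_cast this
              positivity
            · exact le_refl _
          rw [nsmul_eq_mul]
          apply mul_le_mul_of_nonneg_right _ hnn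
          calc ((t2.filter (fun q => q.1 + q.2 = x)).card : ℝ) ≤ ((N + 1 : ℕ) : ℝ) := by exact_mod_cast hcard
            _ = (N:ℝ) + 1 := by push_cast; ring
      _ = ((N:ℝ) + 1) * ∑ x ∈ t2.image (fun q : ℤ × ℤ => q.1 + q.2), h2 x := by rw [Finset.mul_sum]
      _ ≤ ((N:ℝ) + 1) * ((N:ℝ))⁻¹ := by
          apply mul_le_mul_of_nonneg_left _ (by positivity)
          simp only [hh2]
          rw [← Finset.sum_filter]
          apply invsq_sum N hN
          intro x hx
          exact (Finset.mem_filter.mp hx).2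
      _ ≤ 2 := by
          have hNpos : (0:ℝ) < (N:ℝ) := by exact_mod_cast hN
          have hNone : (1:ℝ) ≤ (N:ℝ) := by exact_mod_cast hN
          rw [add_mul, one_mul]
          rw [mul_inv_cancel₀ (ne_of_gt hNpos)]
          have : ((N:ℝ))⁻¹ ≤ 1 := by
            rw [inv_le_one_iff₀]; right; exact hNone
          linarith
  linarith


noncomputable def G2 (H N : ℕ) (q : ℤ × ℤ) : ℝ :=
  if 1 ≤ q.2 ∧ q.2 ≤ q.1 ∧ q.1 < (H:ℤ) then ((q.1 * (N:ℤ) : ℤ) : ℝ)⁻¹ else 0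

lemma G2_nonneg (H N : ℕ) (q : ℤ × ℤ) : 0 ≤ G2 H N q := by
  unfold G2
  split
  · rename_i h
    have hz : (0:ℤ) ≤ q.1 * (N:ℤ) := mul_nonneg (by omega) (by positivity)
    have : (0:ℝ) ≤ ((q.1 * (N:ℤ) : ℤ) : ℝ) := by exact_mod_cast hz
    positivity
  · exact le_refl _

lemma G2sum (H N : ℕ) (hH : 0 < H) (hN : 0 < N) (t : Finset (ℤ × ℤ)) :
    ∑ q ∈ t, G2 H N q ≤ (H:ℝ) / (N:ℝ) := by
  classical
  have hsupp : ∀ q ∈ t, G2 H N q ≠ 0 → (1 ≤ q.2 ∧ q.2 ≤ q.1 ∧ q.1 < (H:ℤ)) := by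
    intro q _ hq
    by_contra h
    exact hq (by unfold G2; rw [if_neg h])
  rw [← Finset.sum_filter_of_ne hsupp]
  have hsub : t.filter (fun q => 1 ≤ q.2 ∧ q.2 ≤ q.1 ∧ q.1 < (H:ℤ)) ⊆
      Finset.Icc 1 ((H:ℤ)-1) ×ˢ Finset.Icc 1 ((H:ℤ)-1) := by
    intro q hq
    have h := (Finset.mem_filter.mp hq).2
    simp only [Finset.mem_product, Finset.mem_Icc]
    omega
  calc ∑ q ∈ t.filter (fun q => 1 ≤ q.2 ∧ q.2 ≤ q.1 ∧ q.1 < (H:ℤ)), G2 H N q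
      ≤ ∑ q ∈ Finset.Icc 1 ((H:ℤ)-1) ×ˢ Finset.Icc 1 ((H:ℤ)-1), G2 H N q :=
        Finset.sum_le_sum_of_subset_of_nonneg hsub (fun q _ _ => G2_nonneg H N q)
    _ = ∑ d ∈ Finset.Icc 1 ((H:ℤ)-1), ∑ a ∈ Finset.Icc 1 ((H:ℤ)-1), G2 H N (d, a) := by
        rw [Finset.sum_product]
    _ ≤ ∑ d ∈ Finset.Icc 1 ((H:ℤ)-1), ((N:ℝ))⁻¹ := by
        apply Finset.sum_le_sum
        intro d hd
        have hd' : 1 ≤ d ∧ d ≤ (H:ℤ) - 1 := by simpa [Finset.mem_Icc] using hd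
        have hdN : (0:ℤ) < d * (N:ℤ) := mul_pos (by omega) (by exact_mod_cast hN)
        have hc : (0:ℝ) ≤ ((d * (N:ℤ) : ℤ) : ℝ)⁻¹ := by
          have : (0:ℝ) < ((d * (N:ℤ) : ℤ) : ℝ) := by exact_mod_cast hdN
          positivity
        calc ∑ a ∈ Finset.Icc 1 ((H:ℤ)-1), G2 H N (d, a)
            ≤ ∑ a ∈ Finset.Icc 1 ((H:ℤ)-1), (if 1 ≤ a ∧ a ≤ d then ((d * (N:ℤ) : ℤ) : ℝ)⁻¹ else 0) := by
              apply Finset.sum_le_sum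
              intro a _
              unfold G2
              by_cases hca : 1 ≤ a ∧ a ≤ d ∧ d < (H:ℤ)
              · rw [if_pos hca, if_pos ⟨hca.1, hca.2.1⟩]
              · rw [if_neg hca]
                split
                · exact hc
                · exact le_refl _
          _ = ((Finset.Icc 1 ((H:ℤ)-1)).filter (fun a => 1 ≤ a ∧ a ≤ d)).card • ((d * (N:ℤ) : ℤ) : ℝ)⁻¹ := by
              rw [← Finset.sum_filter, Finset.sum_const]
          _ ≤ d.toNat • ((d * (N:ℤ) : ℤ) : ℝ)⁻¹ := by
              apply smul_le_smul_of_nonneg_right _ hc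
              have : ((Finset.Icc 1 ((H:ℤ)-1)).filter (fun a => 1 ≤ a ∧ a ≤ d)) ⊆ Finset.Icc 1 d := by
                intro a ha
                have := (Finset.mem_filter.mp ha).2
                simp only [Finset.mem_Icc]; omega
              have := Finset.card_le_card this
              rwa [Int.card_Icc, show d + 1 - 1 = d from by ring] at this
          _ = ((N:ℝ))⁻¹ := by
              rw [nsmul_eq_mul]
              rw [show ((d.toNat : ℕ) : ℝ) = (d:ℝ) from by exact_mod_cast Int.toNat_of_nonneg (by omega : (0:ℤ) ≤ d)]
              push_cast
              have hdR : (0:ℝ) < (d:ℝ) := by exact_mod_cast (by omega : (0:ℤ) < d)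
              have hNR : (0:ℝ) < (N:ℝ) := by exact_mod_cast hN
              field_simp
    _ ≤ (H:ℝ) / (N:ℝ) := by
        rw [Finset.sum_const, nsmul_eq_mul, Int.card_Icc]
        have h1 : ((((H:ℤ) - 1 + 1 - 1).toNat : ℕ) : ℝ) ≤ (H:ℝ) := by
          have : ((H:ℤ) - 1 + 1 - 1).toNat ≤ H := by omega
          exact_mod_cast this
        have hNR : (0:ℝ) < (N:ℝ) := by exact_mod_cast hN
        rw [div_eq_mul_inv]
        exact mul_le_mul_of_nonneg_right h1 (by positivity)



lemma Gcomp (N : ℕ) (hN : 0 < N) (s : Finset (ℤ × ℤ)) :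
    ∑ p ∈ s, G N (|p.1| ⊔ |p.2| - (N:ℤ), (N:ℤ) - |p.1| ⊓ |p.2|) ≤ 48 := by
  classical
  rw [Finset.sum_comp (G N) (fun p : ℤ × ℤ => (|p.1| ⊔ |p.2| - (N:ℤ), (N:ℤ) - |p.1| ⊓ |p.2|))]
  have step : ∀ q ∈ s.image (fun p : ℤ × ℤ => (|p.1| ⊔ |p.2| - (N:ℤ), (N:ℤ) - |p.1| ⊓ |p.2|)),
      (s.filter (fun p : ℤ × ℤ => (|p.1| ⊔ |p.2| - (N:ℤ), (N:ℤ) - |p.1| ⊓ |p.2|) = q)).card • G N q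
        ≤ 16 * G N q := by
    intro q _
    rw [nsmul_eq_mul]
    apply mul_le_mul_of_nonneg_right _ (G_nonneg N q)
    have hsub : s.filter (fun p : ℤ × ℤ => (|p.1| ⊔ |p.2| - (N:ℤ), (N:ℤ) - |p.1| ⊓ |p.2|) = q) ⊆
        ({(N:ℤ)+q.1, -((N:ℤ)+q.1), (N:ℤ)-q.2, -((N:ℤ)-q.2)} : Finset ℤ) ×ˢ
        ({(N:ℤ)+q.1, -((N:ℤ)+q.1), (N:ℤ)-q.2, -((N:ℤ)-q.2)} : Finset ℤ) := by
      intro p hp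
      have hφ := (Finset.mem_filter.mp hp).2
      have ha : |p.1| ⊔ |p.2| - (N:ℤ) = q.1 := congrArg Prod.fst hφ
      have hb : (N:ℤ) - |p.1| ⊓ |p.2| = q.2 := congrArg Prod.snd hφ
      have ha' : |p.1| ⊔ |p.2| = (N:ℤ) + q.1 := by linarith
      have hb' : |p.1| ⊓ |p.2| = (N:ℤ) - q.2 := by linarith
      have ha2 : |p.2| ⊔ |p.1| = (N:ℤ) + q.1 := by rw [sup_comm]; exact ha'
      have hb2 : |p.2| ⊓ |p.1| = (N:ℤ) - q.2 := by rw [inf_comm]; exact hb'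
      rw [Finset.mem_product]
      constructor
      · have := mem4 p.1 p.2 _ _ ha' hb'
        simp only [Finset.mem_insert, Finset.mem_singleton]
        tauto
      · have := mem4 p.2 p.1 _ _ ha2 hb2
        simp only [Finset.mem_insert, Finset.mem_singleton]
        tauto
    have hcard := Finset.card_le_card hsub
    rw [Finset.card_product] at hcard
    have h16 : (s.filter (fun p : ℤ × ℤ => (|p.1| ⊔ |p.2| - (N:ℤ), (N:ℤ) - |p.1| ⊓ |p.2|) = q)).card ≤ 16 :=
      hcard.trans (Nat.mul_le_mul (card4 _ _ _ _) (card4 _ _ _ _))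
    exact_mod_cast h16
  calc ∑ q ∈ s.image (fun p : ℤ × ℤ => (|p.1| ⊔ |p.2| - (N:ℤ), (N:ℤ) - |p.1| ⊓ |p.2|)),
        (s.filter (fun p : ℤ × ℤ => (|p.1| ⊔ |p.2| - (N:ℤ), (N:ℤ) - |p.1| ⊓ |p.2|) = q)).card • G N q
      ≤ ∑ q ∈ s.image (fun p : ℤ × ℤ => (|p.1| ⊔ |p.2| - (N:ℤ), (N:ℤ) - |p.1| ⊓ |p.2|)), 16 * G N q :=
        Finset.sum_le_sum step
    _ = 16 * ∑ q ∈ s.image (fun p : ℤ × ℤ => (|p.1| ⊔ |p.2| - (N:ℤ), (N:ℤ) - |p.1| ⊓ |p.2|)), G N q := by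
        rw [Finset.mul_sum]
    _ ≤ 16 * 3 := by
        apply mul_le_mul_of_nonneg_left (Gsum N hN _) (by norm_num)
    _ = 48 := by norm_num

lemma G2comp (H N : ℕ) (hH : 0 < H) (hN : 0 < N) (s : Finset (ℤ × ℤ)) :
    ∑ p ∈ s, G2 H N (|p.1 - p.2|, |p.1| ⊔ |p.2| - (N:ℤ)) ≤ 36 * ((H:ℝ) / (N:ℝ)) := by
  classical
  rw [Finset.sum_comp (G2 H N) (fun p : ℤ × ℤ => (|p.1 - p.2|, |p.1| ⊔ |p.2| - (N:ℤ)))]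
  have step : ∀ q ∈ s.image (fun p : ℤ × ℤ => (|p.1 - p.2|, |p.1| ⊔ |p.2| - (N:ℤ))),
      (s.filter (fun p : ℤ × ℤ => (|p.1 - p.2|, |p.1| ⊔ |p.2| - (N:ℤ)) = q)).card • G2 H N q
        ≤ 36 * G2 H N q := by
    intro q _
    rw [nsmul_eq_mul]
    apply mul_le_mul_of_nonneg_right _ (G2_nonneg H N q)
    set c := (N:ℤ) + q.2 with hc
    set d := q.1 with hd
    have hsub : s.filter (fun p : ℤ × ℤ => (|p.1 - p.2|, |p.1| ⊔ |p.2| - (N:ℤ)) = q) ⊆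
        ({c, -c, c+d, c-d, -c+d, -c-d} : Finset ℤ) ×ˢ ({c, -c, c+d, c-d, -c+d, -c-d} : Finset ℤ) := by
      intro p hp
      have hφ := (Finset.mem_filter.mp hp).2
      have ha : |p.1 - p.2| = q.1 := congrArg Prod.fst hφ
      have hb : |p.1| ⊔ |p.2| - (N:ℤ) = q.2 := congrArg Prod.snd hφ
      have hb' : |p.1| ⊔ |p.2| = c := by rw [hc]; linarith
      have hb2 : |p.2| ⊔ |p.1| = c := by rw [sup_comm]; exact hb'
      have ha2 : |p.2 - p.1| = d := by rw [abs_sub_comm]; exact ha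
      rw [Finset.mem_product]
      constructor
      · have := mem6 p.1 p.2 c d hb' ha
        simp only [Finset.mem_insert, Finset.mem_singleton]
        tauto
      · have := mem6 p.2 p.1 c d hb2 ha2
        simp only [Finset.mem_insert, Finset.mem_singleton]
        tauto
    have hcard := Finset.card_le_card hsub
    rw [Finset.card_product] at hcard
    have h36 : (s.filter (fun p : ℤ × ℤ => (|p.1 - p.2|, |p.1| ⊔ |p.2| - (N:ℤ)) = q)).card ≤ 36 :=
      hcard.trans (Nat.mul_le_mul (card6 _ _ _ _ _ _) (card6 _ _ _ _ _ _))
    exact_mod_cast h36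
  calc ∑ q ∈ s.image (fun p : ℤ × ℤ => (|p.1 - p.2|, |p.1| ⊔ |p.2| - (N:ℤ))),
        (s.filter (fun p : ℤ × ℤ => (|p.1 - p.2|, |p.1| ⊔ |p.2| - (N:ℤ)) = q)).card • G2 H N q
      ≤ ∑ q ∈ s.image (fun p : ℤ × ℤ => (|p.1 - p.2|, |p.1| ⊔ |p.2| - (N:ℤ))), 36 * G2 H N q :=
        Finset.sum_le_sum step
    _ = 36 * ∑ q ∈ s.image (fun p : ℤ × ℤ => (|p.1 - p.2|, |p.1| ⊔ |p.2| - (N:ℤ))), G2 H N q := by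
        rw [Finset.mul_sum]
    _ ≤ 36 * ((H:ℝ) / (N:ℝ)) := by
        apply mul_le_mul_of_nonneg_left (G2sum H N hH hN _) (by norm_num)



lemma pointwise (V : ℤ → ℂ) (H N : ℕ) (hH : 0 < H) (hHN : H ≤ N) (A Bs : ℝ)
    (hA_le : ∀ j : ℤ, (H:ℤ) ≤ |j| → ‖V j‖ ≤ A)
    (hBs_le : ∀ j : ℤ, ‖V j‖ ≤ Bs)
    (hA0 : 0 ≤ A) (hBs0 : 0 ≤ Bs) (p : ℤ × ℤ) :
    (if (|p.1| ≤ (N:ℤ) ∧ (N:ℤ) < |p.2|) ∨ ((N:ℤ) < |p.1| ∧ |p.2| ≤ (N:ℤ)) then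
        ‖V (p.1 - p.2)‖ / |(p.1:ℝ)^2 - (p.2:ℝ)^2| else 0)
      ≤ A * G N (|p.1| ⊔ |p.2| - (N:ℤ), (N:ℤ) - |p.1| ⊓ |p.2|)
        + Bs * G2 H N (|p.1 - p.2|, |p.1| ⊔ |p.2| - (N:ℤ)) := by
  classical
  obtain ⟨m, k⟩ := p
  simp only
  have hRHS0 : 0 ≤ A * G N (|m| ⊔ |k| - (N:ℤ), (N:ℤ) - |m| ⊓ |k|)
      + Bs * G2 H N (|m - k|, |m| ⊔ |k| - (N:ℤ)) :=
    add_nonneg (mul_nonneg hA0 (G_nonneg _ _)) (mul_nonneg hBs0 (G2_nonneg _ _ _))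
  split
  case isFalse => exact hRHS0
  case isTrue hC =>
  have hm0N : |m| ⊓ |k| ≤ (N:ℤ) := by
    rcases hC with ⟨h1, _⟩ | ⟨_, h2⟩
    · exact le_trans inf_le_left h1
    · exact le_trans inf_le_right h2
  have hM1N : (N:ℤ) < |m| ⊔ |k| := by
    rcases hC with ⟨_, h2⟩ | ⟨h1, _⟩
    · exact lt_of_lt_of_le h2 le_sup_right
    · exact lt_of_lt_of_le h1 le_sup_left
  have hm00 : 0 ≤ |m| ⊓ |k| := le_inf (abs_nonneg m) (abs_nonneg k)
  set M1 := |m| ⊔ |k| with hM1def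
  set m0 := |m| ⊓ |k| with hm0def
  -- denominator identity
  have habs : |m^2 - k^2| = M1^2 - m0^2 := by
    rcases le_total |m| |k| with h | h
    · rw [hM1def, hm0def, max_eq_right h, min_eq_left h]
      have he : m^2 - k^2 = -(|k|^2 - |m|^2) := by rw [← sq_abs m, ← sq_abs k]; ring
      rw [he, abs_neg, abs_of_nonneg]
      have := pow_le_pow_left₀ (abs_nonneg m) h 2
      linarith
    · rw [hM1def, hm0def, max_eq_left h, min_eq_right h]
      have he : m^2 - k^2 = |m|^2 - |k|^2 := by rw [← sq_abs m, ← sq_abs k]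
      rw [he, abs_of_nonneg]
      have := pow_le_pow_left₀ (abs_nonneg k) h 2
      linarith
  have hD : |(m:ℝ)^2 - (k:ℝ)^2| = ((M1^2 - m0^2 : ℤ) : ℝ) := by
    have h1 : (m:ℝ)^2 - (k:ℝ)^2 = ((m^2 - k^2 : ℤ) : ℝ) := by push_cast; ring
    rw [h1, ← Int.cast_abs, habs]
  have hDposZ : (0:ℤ) < M1^2 - m0^2 := by
    have : m0^2 < M1^2 := by
      apply pow_lt_pow_left₀ (lt_of_le_of_lt hm0N hM1N) hm00 (by norm_num)
    linarith
  by_cases hcase : (H:ℤ) ≤ |m - k|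
  · -- large shift: use A and G
    have hGval : G N (M1 - (N:ℤ), (N:ℤ) - m0) = (((M1^2 - m0^2 : ℤ)) : ℝ)⁻¹ := by
      unfold G
      dsimp only
      rw [if_pos ⟨by linarith, by linarith, by linarith⟩]
      congr 1
      push_cast
      ring
    have step : ‖V (m - k)‖ / |(m:ℝ)^2 - (k:ℝ)^2|
        ≤ A * G N (M1 - (N:ℤ), (N:ℤ) - m0) := by
      rw [hGval, hD, div_eq_mul_inv]
      apply mul_le_mul (hA_le _ hcase) (le_refl _) _ hA0
      have : (0:ℝ) < ((M1^2 - m0^2 : ℤ) : ℝ) := by exact_mod_cast hDposZ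
      positivity
    calc ‖V (m - k)‖ / |(m:ℝ)^2 - (k:ℝ)^2|
        ≤ A * G N (M1 - (N:ℤ), (N:ℤ) - m0) := step
      _ ≤ _ := le_add_of_nonneg_right (mul_nonneg hBs0 (G2_nonneg _ _ _))
  · -- small shift: use Bs and G2
    push_neg at hcase
    set d := |m - k| with hddef
    have hd1 : M1 - m0 ≤ d := by
      rw [hM1def, hm0def, hddef]
      rcases le_total |m| |k| with h | h
      · rw [max_eq_right h, min_eq_left h, abs_sub_comm]
        exact abs_sub_abs_le_abs_sub k m
      · rw [max_eq_left h, min_eq_right h]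
        exact abs_sub_abs_le_abs_sub m k
    have hdge1 : 1 ≤ d := by
      have : 1 ≤ M1 - (N:ℤ) := by linarith
      linarith
    -- |m + k| ≥ N
    have hsum : (N:ℤ) ≤ |m + k| := by
      have h1 : 2*|m| - d ≤ |m + k| := by
        have : |m + k| = |2*m - (m - k)| := by congr 1; ring
        rw [this]
        have h2 := abs_sub_abs_le_abs_sub (2*m) (m - k)
        have h3 : |2*m| = 2*|m| := by rw [abs_mul]; norm_num
        rw [hddef]
        linarith [le_abs_self (|2*m| - |m-k|)]
      have h1' : 2*|k| - d ≤ |m + k| := by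
        have : |m + k| = |2*k + (m - k)| := by congr 1; ring
        rw [this]
        have h2 := abs_sub_abs_le_abs_sub (2*k) (-(m - k))
        have h3 : |2*k| = 2*|k| := by rw [abs_mul]; norm_num
        have h4 : |(-(m-k))| = d := by rw [abs_neg, hddef]
        have h5 : 2*k + (m - k) = 2*k - (-(m-k)) := by ring
        rw [h5]
        linarith [le_abs_self (|2*k| - |(-(m-k))|)]
      have hM1cases : M1 = |m| ∨ M1 = |k| := max_choice _ _
      have hd' : d ≤ (H:ℤ) - 1 := by omega
      rcases hM1cases with h | h
      · have : (N:ℤ) + 1 ≤ |m| := by rw [← h]; linarith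
        have hHN' : (H:ℤ) ≤ (N:ℤ) := by exact_mod_cast hHN
        linarith
      · have : (N:ℤ) + 1 ≤ |k| := by rw [← h]; linarith
        have hHN' : (H:ℤ) ≤ (N:ℤ) := by exact_mod_cast hHN
        linarith
    have habs2 : |m^2 - k^2| = d * |m + k| := by
      rw [hddef, ← abs_mul]
      congr 1
      ring
    have hdN : (0:ℤ) < d * (N:ℤ) := mul_pos (by linarith) (by exact_mod_cast hH.trans_le hHN)
    have hDge : (d * (N:ℤ) : ℤ) ≤ M1^2 - m0^2 := by
      rw [← habs, habs2]
      exact mul_le_mul_of_nonneg_left hsum (by linarith)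
    have hG2val : G2 H N (d, M1 - (N:ℤ)) = ((d * (N:ℤ) : ℤ) : ℝ)⁻¹ := by
      unfold G2
      dsimp only
      rw [if_pos ⟨by linarith, by linarith, by linarith⟩]
    have step : ‖V (m - k)‖ / |(m:ℝ)^2 - (k:ℝ)^2|
        ≤ Bs * G2 H N (d, M1 - (N:ℤ)) := by
      rw [hG2val, hD, div_eq_mul_inv]
      have hpos : (0:ℝ) < ((d * (N:ℤ) : ℤ) : ℝ) := by exact_mod_cast hdN
      have hDpos : (0:ℝ) < ((M1^2 - m0^2 : ℤ) : ℝ) := by exact_mod_cast hDposZ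
      exact mul_le_mul (hBs_le _) (inv_anti₀ hpos (by exact_mod_cast hDge)) (by positivity) hBs0
    calc ‖V (m - k)‖ / |(m:ℝ)^2 - (k:ℝ)^2|
        ≤ Bs * G2 H N (d, M1 - (N:ℤ)) := step
      _ ≤ _ := le_add_of_nonneg_left (mul_nonneg hA0 (G_nonneg _ _))

end Stmt10Aux

open Stmt10Aux in
theorem stmt10 :
    ∃ C : ℝ, 0 < C ∧ ∀ V : ℤ → ℂ, (∃ B : ℝ, ∀ j : ℤ, ‖V j‖ ≤ B) →
      ∀ H N : ℕ, 0 < H → H ≤ N →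
        (∑' p : ℤ × ℤ,
            if (|p.1| ≤ (N : ℤ) ∧ (N : ℤ) < |p.2|) ∨ ((N : ℤ) < |p.1| ∧ |p.2| ≤ (N : ℤ)) then
              ‖V (p.1 - p.2)‖ / |(p.1 : ℝ) ^ 2 - (p.2 : ℝ) ^ 2|
            else 0) ≤
          C * ((⨆ j : {j : ℤ // (H : ℤ) ≤ |j|}, ‖V j‖) +
            (H : ℝ) / N * ⨆ j : ℤ, ‖V j‖) := by
  classical
  refine ⟨48, by norm_num, ?_⟩
  rintro V ⟨B, hB⟩ H N hH hHN
  have hN : 0 < N := hH.trans_le hHN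
  have hbddA : BddAbove (Set.range fun j : {j : ℤ // (H:ℤ) ≤ |j|} => ‖V j‖) :=
    ⟨B, by rintro x ⟨j, rfl⟩; exact hB _⟩
  have hbddB : BddAbove (Set.range fun j : ℤ => ‖V j‖) :=
    ⟨B, by rintro x ⟨j, rfl⟩; exact hB _⟩
  set A := ⨆ j : {j : ℤ // (H : ℤ) ≤ |j|}, ‖V j‖ with hA
  set Bs := ⨆ j : ℤ, ‖V j‖ with hBs
  have hA_le : ∀ j : ℤ, (H:ℤ) ≤ |j| → ‖V j‖ ≤ A := fun j hj =>
    le_ciSup hbddA (⟨j, hj⟩ : {j : ℤ // (H:ℤ) ≤ |j|})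
  have hBs_le : ∀ j : ℤ, ‖V j‖ ≤ Bs := fun j => le_ciSup hbddB j
  have hA0 : 0 ≤ A :=
    le_trans (norm_nonneg _) (hA_le (H:ℤ) (by rw [abs_of_nonneg (by positivity)]))
  have hBs0 : 0 ≤ Bs := le_trans (norm_nonneg _) (hBs_le 0)
  have hdiv0 : 0 ≤ (H:ℝ)/(N:ℝ) := by positivity
  apply tsum_le_of_sum_le'
  · exact mul_nonneg (by norm_num) (add_nonneg hA0 (mul_nonneg hdiv0 hBs0))
  · intro s
    calc ∑ p ∈ s,
          (if (|p.1| ≤ (N : ℤ) ∧ (N : ℤ) < |p.2|) ∨ ((N : ℤ) < |p.1| ∧ |p.2| ≤ (N : ℤ)) then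
              ‖V (p.1 - p.2)‖ / |(p.1 : ℝ) ^ 2 - (p.2 : ℝ) ^ 2|
            else 0)
        ≤ ∑ p ∈ s, (A * G N (|p.1| ⊔ |p.2| - (N:ℤ), (N:ℤ) - |p.1| ⊓ |p.2|)
            + Bs * G2 H N (|p.1 - p.2|, |p.1| ⊔ |p.2| - (N:ℤ))) :=
          Finset.sum_le_sum (fun p _ => pointwise V H N hH hHN A Bs hA_le hBs_le hA0 hBs0 p)
      _ = A * (∑ p ∈ s, G N (|p.1| ⊔ |p.2| - (N:ℤ), (N:ℤ) - |p.1| ⊓ |p.2|))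
            + Bs * (∑ p ∈ s, G2 H N (|p.1 - p.2|, |p.1| ⊔ |p.2| - (N:ℤ))) := by
          rw [Finset.sum_add_distrib, Finset.mul_sum, Finset.mul_sum]
      _ ≤ A * 48 + Bs * (36 * ((H:ℝ)/(N:ℝ))) :=
          add_le_add (mul_le_mul_of_nonneg_left (Gcomp N hN s) hA0)
            (mul_le_mul_of_nonneg_left (G2comp H N hH hN s) hBs0)
      _ ≤ 48 * (A + (H:ℝ)/(N:ℝ) * Bs) := by nlinarith [mul_nonneg hdiv0 hBs0]
end

section
/- Let q = (q(k))_{k ∈ ℤ} be a square-summable sequence of complex numbers, let N be a positive integer and y ∈ ℝ, and set λ = N² + N + iy. Then ψ_N(y) ≤ N² · ( ‖q‖²/N + 16 · E_{√N}(q)² ) · b_N(y) + 16 · E_{4N}(q)² · a_N(y). -/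
/-- The point `λ = N² + N + iy`. -/
noncomputable def lam (N : ℕ) (y : ℝ) : ℂ :=
  (((N : ℝ) ^ 2 + N : ℝ) : ℂ) + (y : ℝ) * Complex.I

/-- `ψ_N(y) = ∑_{j,m ∈ ℤ} (j−m)² |q(j−m)|² / (|λ−j²|·|λ−m²|)`. -/
noncomputable def psi (q : ℤ → ℂ) (N : ℕ) (y : ℝ) : ℝ :=
  ∑' p : ℤ × ℤ,
    ((p.1 : ℝ) - p.2) ^ 2 * ‖q (p.1 - p.2)‖ ^ 2 /
      (‖lam N y - (p.1 : ℂ) ^ 2‖ * ‖lam N y - (p.2 : ℂ) ^ 2‖)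

/-- `a_N(y) = ∑_{k ∈ ℤ} 1/|λ−k²|`. -/
noncomputable def aN (N : ℕ) (y : ℝ) : ℝ :=
  ∑' k : ℤ, 1 / ‖lam N y - (k : ℂ) ^ 2‖

/-- `b_N(y) = ∑_{k ∈ ℤ} 1/|λ−k²|²`. -/
noncomputable def bN (N : ℕ) (y : ℝ) : ℝ :=
  ∑' k : ℤ, 1 / ‖lam N y - (k : ℂ) ^ 2‖ ^ 2

/-- `‖q‖ = (∑_{k ∈ ℤ} |q(k)|²)^{1/2}`. -/
noncomputable def l2norm (q : ℤ → ℂ) : ℝ :=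
  Real.sqrt (∑' k : ℤ, ‖q k‖ ^ 2)

/-- The tail `E_M(q) = (∑_{|k| ≥ M} |q(k)|²)^{1/2}`. -/
noncomputable def tailE (q : ℤ → ℂ) (M : ℝ) : ℝ :=
  Real.sqrt (∑' k : ℤ, if M ≤ |(k : ℝ)| then ‖q k‖ ^ 2 else 0)

set_option maxHeartbeats 1000000 in
theorem stmt11 (q : ℤ → ℂ) (hq : Summable fun k : ℤ => ‖q k‖ ^ 2)
    (N : ℕ) (hN : 0 < N) (y : ℝ) :
    psi q N y ≤
      (N : ℝ) ^ 2 * (l2norm q ^ 2 / N + 16 * tailE q (Real.sqrt N) ^ 2) * bN N y +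
        16 * tailE q (4 * N) ^ 2 * aN N y := by
  have hN1 : (1:ℝ) ≤ N := by exact_mod_cast hN
  set A : ℤ → ℝ := fun j => ‖lam N y - (j:ℂ)^2‖ with hAdef
  -- real part bound
  have hAre : ∀ j : ℤ, |(N:ℝ)^2 + N - (j:ℝ)^2| ≤ A j := by
    intro j
    have e : lam N y - (j:ℂ)^2 = Complex.ofReal ((N:ℝ)^2 + N - (j:ℝ)^2) + (y:ℝ) * Complex.I := by
      unfold lam; push_cast; ring
    have hre : (lam N y - (j:ℂ)^2).re = (N:ℝ)^2 + N - (j:ℝ)^2 := by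
      rw [e, Complex.add_re, Complex.ofReal_re, Complex.mul_re]; simp
    have h := Complex.abs_re_le_norm (lam N y - (j:ℂ)^2)
    rwa [hre] at h
  -- A j ≥ N
  have hAN : ∀ j : ℤ, (N:ℝ) ≤ A j := by
    intro j
    refine le_trans ?_ (hAre j)
    rcases le_or_gt (j^2) ((N:ℤ)^2) with h | h
    · have h' : (j:ℝ)^2 ≤ (N:ℝ)^2 := by exact_mod_cast h
      rw [abs_of_nonneg (by nlinarith)]
      nlinarith
    · have h2 : ((N:ℤ)+1)^2 ≤ j^2 := by
        have hab : (N:ℤ) + 1 ≤ |j| := by nlinarith [sq_abs j, abs_nonneg j]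
        calc ((N:ℤ)+1)^2 ≤ |j|^2 := by nlinarith [abs_nonneg j]
          _ = j^2 := sq_abs j
      have h' : ((N:ℝ)+1)^2 ≤ (j:ℝ)^2 := by exact_mod_cast h2
      rw [abs_of_nonpos (by nlinarith)]
      nlinarith
  have hApos : ∀ j : ℤ, 0 < A j := fun j => lt_of_lt_of_le (by positivity) (hAN j)
  have hA1 : ∀ j : ℤ, 1 ≤ A j := fun j => le_trans hN1 (hAN j)
  have hAlow : ∀ j : ℤ, (j:ℝ)^2 - ((N:ℝ)^2 + N) ≤ A j := by
    intro j
    refine le_trans ?_ (hAre j)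
    rw [abs_sub_comm]
    exact le_abs_self _
  -- summability of 1/A and 1/A^2
  have hSinv : Summable (fun k : ℤ => 1 / A k) := by
    have hb : Summable (fun k : ℤ => (if k = 0 then (1:ℝ) else 0) + (4*(N:ℝ)^2+4) * (1/(k:ℝ)^2)) := by
      apply Summable.add
      · exact summable_of_ne_finset_zero (s := {0}) (by intro k hk; simp at hk; simp [hk])
      · exact (Real.summable_one_div_int_pow.mpr one_lt_two).mul_left _
    refine Summable.of_nonneg_of_le (fun k => by positivity) (fun k => ?_) hb
    by_cases hk0 : k = 0
    · subst hk0
      have h2 : 1 / A 0 ≤ 1 := by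
        rw [div_le_one (hApos 0)]; exact hA1 0
      simp only [if_pos rfl, Int.cast_zero]
      norm_num
      rw [← one_div]
      exact h2
    · have hkR : ((k:ℝ))^2 ≠ 0 := by
        have : (k:ℝ) ≠ 0 := Int.cast_ne_zero.mpr hk0
        positivity
      have hkpos : (0:ℝ) < (k:ℝ)^2 := lt_of_le_of_ne (sq_nonneg _) (Ne.symm hkR)
      have hAk : (k:ℝ)^2 / (4*(N:ℝ)^2+4) ≤ A k := by
        rcases le_or_gt ((k:ℝ)^2) (2*(N:ℝ)^2 + 2*N) with h | h
        · refine le_trans ?_ (hA1 k)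
          rw [div_le_one (by positivity)]; nlinarith
        · refine le_trans ?_ (hAlow k)
          rw [div_le_iff₀ (by positivity)]
          nlinarith
      have h1 : 1 / A k ≤ 1 / ((k:ℝ)^2 / (4*(N:ℝ)^2+4)) :=
        one_div_le_one_div_of_le (by positivity) hAk
      have h2 : 1 / ((k:ℝ)^2 / (4*(N:ℝ)^2+4)) = (4*(N:ℝ)^2+4) * (1/(k:ℝ)^2) := by
        field_simp
      rw [h2] at h1
      simp only [if_neg hk0]
      linarith
  have hSinv2 : Summable (fun k : ℤ => 1 / A k ^ 2) := by
    refine Summable.of_nonneg_of_le (fun k => by positivity) (fun k => ?_) hSinv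
    apply one_div_le_one_div_of_le (hApos k)
    nlinarith [hA1 k, hApos k]
  -- the weights
  set w1 : ℤ → ℝ := fun k => if ((k:ℝ))^2 ≤ 16*(N:ℝ)^2 then (k:ℝ)^2 * ‖q k‖^2 else 0 with hw1def
  set w2 : ℤ → ℝ := fun k => if ((k:ℝ))^2 ≤ 16*(N:ℝ)^2 then 0 else 8 * ‖q k‖^2 with hw2def
  have hw1nn : ∀ k, 0 ≤ w1 k := by intro k; simp only [hw1def]; positivity
  have hw2nn : ∀ k, 0 ≤ w2 k := by intro k; simp only [hw2def]; positivity
  have hw1S : Summable w1 := by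
    refine Summable.of_nonneg_of_le hw1nn (fun k => ?_) (hq.mul_left (16*(N:ℝ)^2))
    simp only [hw1def]
    split_ifs with h
    · exact mul_le_mul_of_nonneg_right h (by positivity)
    · positivity
  have hw2S : Summable w2 := by
    refine Summable.of_nonneg_of_le hw2nn (fun k => ?_) (hq.mul_left 8)
    simp only [hw2def]
    split_ifs with h
    · positivity
    · exact le_refl _
  -- summand functions
  set g1 : ℤ → ℝ := fun j => 1 / (2 * A j ^ 2) with hg1def
  set g2 : ℤ → ℝ := fun j => 1 / A j with hg2def
  have hg1nn : ∀ j, 0 ≤ g1 j := fun j => by simp only [hg1def]; positivity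
  have hg2nn : ∀ j, 0 ≤ g2 j := fun j => by simp only [hg2def]; positivity
  have hg1S : Summable g1 := by
    have : (fun j : ℤ => 1 / (2 * A j ^ 2)) = fun j => (1 / A j ^ 2) * (1/2) := by
      funext j; ring
    rw [hg1def, this]
    exact hSinv2.mul_right _
  have hg2S : Summable g2 := hSinv
  -- the equivalences
  let e1 : ℤ × ℤ ≃ ℤ × ℤ :=
    ⟨fun p => (p.2, p.2 - p.1), fun p => (p.1 - p.2, p.1),
      fun p => by simp, fun p => by simp⟩
  let e2 : ℤ × ℤ ≃ ℤ × ℤ :=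
    ⟨fun p => (p.2 + p.1, p.2), fun p => (p.1 - p.2, p.2),
      fun p => by simp, fun p => by simp⟩
  -- generic: tsum of w(p.1-p.2) * g(p.1)
  have key_prod : ∀ (w g : ℤ → ℝ), (∀ k, 0 ≤ w k) → (∀ j, 0 ≤ g j) → Summable w → Summable g →
      (Summable (fun p : ℤ × ℤ => w (p.1 - p.2) * g p.1) ∧
        ∑' p : ℤ × ℤ, w (p.1 - p.2) * g p.1 = (∑' k, w k) * (∑' j, g j)) ∧
      (Summable (fun p : ℤ × ℤ => w (p.1 - p.2) * g p.2) ∧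
        ∑' p : ℤ × ℤ, w (p.1 - p.2) * g p.2 = (∑' k, w k) * (∑' j, g j)) := by
    intro w g hwnn hgnn hwS hgS
    have hwn : Summable (fun k => ‖w k‖) := by
      refine hwS.congr fun k => ?_
      rw [Real.norm_eq_abs, abs_of_nonneg (hwnn k)]
    have hgn : Summable (fun j => ‖g j‖) := by
      refine hgS.congr fun j => ?_
      rw [Real.norm_eq_abs, abs_of_nonneg (hgnn j)]
    have hprodS : Summable (fun z : ℤ × ℤ => w z.1 * g z.2) :=
      summable_mul_of_summable_norm hwn hgn
    have hprodT : (∑' k, w k) * (∑' j, g j) = ∑' z : ℤ × ℤ, w z.1 * g z.2 :=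
      tsum_mul_tsum_of_summable_norm hwn hgn
    constructor
    · have hcomp : (fun p : ℤ × ℤ => w (p.1 - p.2) * g p.1) ∘ e1 = fun z : ℤ × ℤ => w z.1 * g z.2 := by
        funext z
        simp [Function.comp, e1, sub_sub_cancel]
      have hS : Summable (fun p : ℤ × ℤ => w (p.1 - p.2) * g p.1) := by
        rw [← e1.summable_iff, hcomp]
        exact hprodS
      refine ⟨hS, ?_⟩
      rw [← e1.tsum_eq (fun p : ℤ × ℤ => w (p.1 - p.2) * g p.1)]
      rw [show (fun z : ℤ×ℤ => ((fun p : ℤ × ℤ => w (p.1 - p.2) * g p.1) (e1 z))) = fun z : ℤ×ℤ => w z.1 * g z.2 from hcomp]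
      exact hprodT.symm
    · have hcomp : (fun p : ℤ × ℤ => w (p.1 - p.2) * g p.2) ∘ e2 = fun z : ℤ × ℤ => w z.1 * g z.2 := by
        funext z
        simp [Function.comp, e2, add_sub_cancel_left]
      have hS : Summable (fun p : ℤ × ℤ => w (p.1 - p.2) * g p.2) := by
        rw [← e2.summable_iff, hcomp]
        exact hprodS
      refine ⟨hS, ?_⟩
      rw [← e2.tsum_eq (fun p : ℤ × ℤ => w (p.1 - p.2) * g p.2)]
      rw [show (fun z : ℤ×ℤ => ((fun p : ℤ × ℤ => w (p.1 - p.2) * g p.2) (e2 z))) = fun z : ℤ×ℤ => w z.1 * g z.2 from hcomp]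
      exact hprodT.symm
  obtain ⟨⟨hS11, hT11⟩, ⟨hS12, hT12⟩⟩ := key_prod w1 g1 hw1nn hg1nn hw1S hg1S
  obtain ⟨⟨hS21, hT21⟩, ⟨hS22, hT22⟩⟩ := key_prod w2 g2 hw2nn hg2nn hw2S hg2S
  -- G and the pointwise bound
  set F : ℤ × ℤ → ℝ := fun p =>
    ((p.1 : ℝ) - p.2) ^ 2 * ‖q (p.1 - p.2)‖ ^ 2 / (A p.1 * A p.2) with hFdef
  set G : ℤ × ℤ → ℝ := fun p =>
    w1 (p.1 - p.2) * g1 p.1 + w1 (p.1 - p.2) * g1 p.2 +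
      (w2 (p.1 - p.2) * g2 p.1 + w2 (p.1 - p.2) * g2 p.2) with hGdef
  have hGS : Summable G := ((hS11.add hS12).add (hS21.add hS22))
  have hFnn : ∀ p, 0 ≤ F p := by
    intro p; simp only [hFdef]; positivity
  have key : ∀ p : ℤ × ℤ, F p ≤ G p := by
    rintro ⟨j, m⟩
    set k : ℤ := j - m with hkdef
    have hcast : ((j:ℝ) - m) = ((k:ℤ):ℝ) := by push_cast [hkdef]; ring
    have ha := hApos j
    have hb := hApos m
    simp only [hFdef, hGdef, hg1def, hg2def]
    by_cases hk : ((k:ℝ))^2 ≤ 16*(N:ℝ)^2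
    · have hw1k : w1 k = (k:ℝ)^2 * ‖q k‖^2 := by simp only [hw1def, if_pos hk]
      have hw2k : w2 k = 0 := by simp only [hw2def, if_pos hk]
      simp only [← hkdef, hw1k, hw2k, zero_mul, add_zero, hcast]
      have hamgm : 1/(A j * A m) ≤ 1/(2 * A j^2) + 1/(2 * A m^2) := by
        rw [div_add_div _ _ (by positivity) (by positivity), div_le_div_iff₀ (by positivity) (by positivity)]
        nlinarith [mul_nonneg (mul_nonneg ha.le hb.le) (sq_nonneg (A j - A m))]
      calc ((k:ℝ))^2 * ‖q k‖^2 / (A j * A m)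
          = ((k:ℝ))^2 * ‖q k‖^2 * (1/(A j * A m)) := by ring
        _ ≤ ((k:ℝ))^2 * ‖q k‖^2 * (1/(2 * A j^2) + 1/(2 * A m^2)) := by
            exact mul_le_mul_of_nonneg_left hamgm (by positivity)
        _ = (k:ℝ)^2 * ‖q k‖^2 * (1/(2 * A j^2)) + (k:ℝ)^2 * ‖q k‖^2 * (1/(2 * A m^2)) + 0 := by ring
        _ ≤ _ := by simp
    · have hw1k : w1 k = 0 := by simp only [hw1def, if_neg hk]
      have hw2k : w2 k = 8 * ‖q k‖^2 := by simp only [hw2def, if_neg hk]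
      push_neg at hk
      -- a + b ≥ k^2/8 : one of A j, A m is at least k²/8
      have hbig : (k:ℝ)^2/8 ≤ A j + A m := by
        have htri : |(k:ℝ)| ≤ |(j:ℝ)| + |(m:ℝ)| := by
          rw [← hcast]
          exact abs_sub _ _
        rcases le_total (|(j:ℝ)|) (|(m:ℝ)|) with hc | hc
        · have hm2 : (k:ℝ)^2/4 ≤ (m:ℝ)^2 := by
            nlinarith [sq_abs ((m:ℝ)), sq_abs ((k:ℝ)), abs_nonneg ((k:ℝ)), abs_nonneg ((m:ℝ))]
          have : (k:ℝ)^2/8 ≤ A m := by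
            refine le_trans ?_ (hAlow m)
            nlinarith
          nlinarith
        · have hj2 : (k:ℝ)^2/4 ≤ (j:ℝ)^2 := by
            nlinarith [sq_abs ((j:ℝ)), sq_abs ((k:ℝ)), abs_nonneg ((k:ℝ)), abs_nonneg ((j:ℝ))]
          have : (k:ℝ)^2/8 ≤ A j := by
            refine le_trans ?_ (hAlow j)
            nlinarith
          nlinarith
      have hdiv : (k:ℝ)^2 / (A j * A m) ≤ 8 * (1/A j + 1/A m) := by
        rw [div_le_iff₀ (by positivity)]
        have : 8 * (1/A j + 1/A m) * (A j * A m) = 8 * (A j + A m) := by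
          field_simp; ring
        rw [this]
        linarith
      simp only [← hkdef, hw1k, hw2k, zero_mul, zero_add, hcast]
      calc ((k:ℝ))^2 * ‖q k‖^2 / (A j * A m)
          = ‖q k‖^2 * ((k:ℝ)^2 / (A j * A m)) := by ring
        _ ≤ ‖q k‖^2 * (8 * (1/A j + 1/A m)) := by
            exact mul_le_mul_of_nonneg_left hdiv (by positivity)
        _ = 8 * ‖q k‖^2 * (1/A j) + 8 * ‖q k‖^2 * (1/A m) := by ring
  have hFS : Summable F := Summable.of_nonneg_of_le hFnn key hGS
  -- sum G
  have hsumG : ∑' p, G p = (∑' k, w1 k) * (∑' j, g1 j) + (∑' k, w1 k) * (∑' j, g1 j) +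
      ((∑' k, w2 k) * (∑' j, g2 j) + (∑' k, w2 k) * (∑' j, g2 j)) := by
    simp only [hGdef]
    rw [Summable.tsum_add (hS11.add hS12) (hS21.add hS22), Summable.tsum_add hS11 hS12, Summable.tsum_add hS21 hS22,
      hT11, hT12, hT21, hT22]
  -- identify ∑ g1 and ∑ g2 with bN and aN
  have hg1sum : ∑' j, g1 j = bN N y * (1/2) := by
    have h1 : ∀ j : ℤ, g1 j = (1 / A j ^2) * (1/2) := by
      intro j; simp only [hg1def]; ring
    rw [tsum_congr h1, tsum_mul_right]
    rfl
  have hg2sum : ∑' j, g2 j = aN N y := rfl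
  -- bounds for W1 and W2
  set Q : ℝ := ∑' k : ℤ, ‖q k‖ ^ 2 with hQdef
  set E1 : ℝ := ∑' k : ℤ, (if Real.sqrt N ≤ |(k:ℝ)| then ‖q k‖ ^ 2 else 0) with hE1def
  set E2 : ℝ := ∑' k : ℤ, (if 4 * (N:ℝ) ≤ |(k:ℝ)| then ‖q k‖ ^ 2 else 0) with hE2def
  have hE1S : Summable (fun k : ℤ => if Real.sqrt N ≤ |(k:ℝ)| then ‖q k‖ ^ 2 else 0) := by
    refine Summable.of_nonneg_of_le (fun k => by positivity) (fun k => ?_) hq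
    split_ifs <;> simp [sq_nonneg]
  have hE2S : Summable (fun k : ℤ => if 4 * (N:ℝ) ≤ |(k:ℝ)| then ‖q k‖ ^ 2 else 0) := by
    refine Summable.of_nonneg_of_le (fun k => by positivity) (fun k => ?_) hq
    split_ifs <;> simp [sq_nonneg]
  have hW1 : (∑' k, w1 k) ≤ (N:ℝ) * Q + 16 * (N:ℝ)^2 * E1 := by
    have hptw : ∀ k : ℤ, w1 k ≤ (N:ℝ) * ‖q k‖^2 +
        16 * (N:ℝ)^2 * (if Real.sqrt N ≤ |(k:ℝ)| then ‖q k‖ ^ 2 else 0) := by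
      intro k
      have hite : (0:ℝ) ≤ (if Real.sqrt N ≤ |(k:ℝ)| then ‖q k‖ ^ 2 else 0) := by
        split_ifs <;> positivity
      simp only [hw1def]
      by_cases h16 : ((k:ℝ))^2 ≤ 16*(N:ℝ)^2
      · rw [if_pos h16]
        by_cases hsm : ((k:ℝ))^2 ≤ (N:ℝ)
        · have h1 := mul_le_mul_of_nonneg_right hsm (sq_nonneg (‖q k‖))
          have h2 : (0:ℝ) ≤ 16 * (N:ℝ)^2 * (if Real.sqrt N ≤ |(k:ℝ)| then ‖q k‖ ^ 2 else 0) := by positivity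
          linarith
        · push_neg at hsm
          have hsq : Real.sqrt N ≤ |(k:ℝ)| := by
            rw [← Real.sqrt_sq_eq_abs]
            exact Real.sqrt_le_sqrt (le_of_lt hsm)
          rw [if_pos hsq]
          have h1 := mul_le_mul_of_nonneg_right h16 (sq_nonneg (‖q k‖))
          have h2 : (0:ℝ) ≤ (N:ℝ) * ‖q k‖ ^ 2 := by positivity
          linarith
      · rw [if_neg h16]
        have h2 : (0:ℝ) ≤ (N:ℝ) * ‖q k‖ ^ 2 := by positivity
        have h3 : (0:ℝ) ≤ 16 * (N:ℝ)^2 * (if Real.sqrt N ≤ |(k:ℝ)| then ‖q k‖ ^ 2 else 0) := by positivity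
        linarith
    calc (∑' k, w1 k) ≤ ∑' k : ℤ, ((N:ℝ) * ‖q k‖^2 +
        16 * (N:ℝ)^2 * (if Real.sqrt N ≤ |(k:ℝ)| then ‖q k‖ ^ 2 else 0)) :=
          Summable.tsum_le_tsum hptw hw1S ((hq.mul_left _).add (hE1S.mul_left _))
      _ = (N:ℝ) * Q + 16 * (N:ℝ)^2 * E1 := by
          rw [Summable.tsum_add (hq.mul_left _) (hE1S.mul_left _), tsum_mul_left, tsum_mul_left]
  have hW2 : (∑' k, w2 k) ≤ 8 * E2 := by
    have hptw : ∀ k : ℤ, w2 k ≤ 8 * (if 4 * (N:ℝ) ≤ |(k:ℝ)| then ‖q k‖ ^ 2 else 0) := by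
      intro k
      simp only [hw2def]
      by_cases h16 : ((k:ℝ))^2 ≤ 16*(N:ℝ)^2
      · rw [if_pos h16]
        have : (0:ℝ) ≤ (if 4 * (N:ℝ) ≤ |(k:ℝ)| then ‖q k‖ ^ 2 else 0) := by
          split_ifs <;> positivity
        linarith
      · rw [if_neg h16]
        push_neg at h16
        have h4 : 4 * (N:ℝ) ≤ |(k:ℝ)| := by
          nlinarith [sq_abs ((k:ℝ)), abs_nonneg ((k:ℝ)), hN1]
        rw [if_pos h4]
    calc (∑' k, w2 k) ≤ ∑' k : ℤ, 8 * (if 4 * (N:ℝ) ≤ |(k:ℝ)| then ‖q k‖ ^ 2 else 0) :=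
          Summable.tsum_le_tsum hptw hw2S (hE2S.mul_left _)
      _ = 8 * E2 := tsum_mul_left
  -- nonnegativity of aN bN and weight sums
  have haNnn : 0 ≤ aN N y := tsum_nonneg (fun k => by positivity)
  have hbNnn : 0 ≤ bN N y := tsum_nonneg (fun k => by positivity)
  have hW1nn : 0 ≤ ∑' k, w1 k := tsum_nonneg hw1nn
  have hW2nn : 0 ≤ ∑' k, w2 k := tsum_nonneg hw2nn
  have hE1nn : 0 ≤ E1 := tsum_nonneg (fun k => by split_ifs <;> positivity)
  have hE2nn : 0 ≤ E2 := tsum_nonneg (fun k => by split_ifs <;> positivity)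
  have hQnn : 0 ≤ Q := tsum_nonneg (fun k => by positivity)
  -- replace the norms
  have hl2 : l2norm q ^ 2 = Q := Real.sq_sqrt (tsum_nonneg (fun k => by positivity))
  have htail1 : tailE q (Real.sqrt N) ^ 2 = E1 := Real.sq_sqrt (tsum_nonneg (fun k => by split_ifs <;> positivity))
  have htail2 : tailE q (4 * N) ^ 2 = E2 := by
    have : ((4 : ℝ) * (N:ℕ)) = 4 * (N:ℝ) := by norm_cast
    rw [tailE]
    rw [hE2def]
    exact Real.sq_sqrt (tsum_nonneg (fun k => by split_ifs <;> positivity))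
  -- put it together
  have hpsi : psi q N y = ∑' p, F p := rfl
  have h1 : psi q N y ≤ ∑' p, G p := by
    rw [hpsi]
    exact Summable.tsum_le_tsum key hFS hGS
  rw [hsumG, hg1sum, hg2sum] at h1
  rw [hl2, htail1, htail2]
  have hNne : (N:ℝ) ≠ 0 := by positivity
  have hrhs : (N : ℝ) ^ 2 * (Q / N + 16 * E1) = (N:ℝ) * Q + 16 * (N:ℝ)^2 * E1 := by
    field_simp
  rw [hrhs]
  have hb1 : (∑' k, w1 k) * (bN N y * (1/2)) + (∑' k, w1 k) * (bN N y * (1/2)) +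
      ((∑' k, w2 k) * aN N y + (∑' k, w2 k) * aN N y) ≤
      ((N:ℝ) * Q + 16 * (N:ℝ)^2 * E1) * bN N y + 16 * E2 * aN N y := by
    nlinarith [mul_le_mul_of_nonneg_right hW1 hbNnn, mul_le_mul_of_nonneg_right hW2 haNnn]
  linarith
end

section
/- Let q = (q(k))_{k ∈ ℤ} be a square-summable sequence of complex numbers, let N ≥ 5 be an integer and y ∈ ℝ with |y| ≥ N⁸, and set λ = N² + N + iy. Then ψ_N(y) ≤ N² · ( ‖q‖²/N + 16 · E_{√N}(q)² ) · b_N(y) + ( ‖q‖²/√|y| + 16 · E_{|y|^{1/4}}(q)² ) · a_N(y). -/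
/- ### Auxiliary definitions -/

/-- `|λ - j²|`. -/
noncomputable def Af (N : ℕ) (y : ℝ) (j : ℤ) : ℝ := ‖lam N y - (j : ℂ) ^ 2‖

/-- Summand of `psi`. -/
noncomputable def Ff (q : ℤ → ℂ) (N : ℕ) (y : ℝ) (p : ℤ × ℤ) : ℝ :=
  ((p.1 : ℝ) - p.2) ^ 2 * ‖q (p.1 - p.2)‖ ^ 2 / (Af N y p.1 * Af N y p.2)

/-- Reindexing `(k, m) ↦ (m + k, m)`. -/
def shiftEquiv' : ℤ × ℤ ≃ ℤ × ℤ where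
  toFun p := (p.2 + p.1, p.2)
  invFun p := (p.1 - p.2, p.2)
  left_inv p := by simp
  right_inv p := by simp

/-- Majorant summability over ℤ. -/
lemma majorant_summable : Summable (fun j : ℤ => 4 / ((j : ℝ) ^ 2 + 1)) := by
  have base : Summable (fun n : ℕ => 4 * (1 / ((n : ℝ)) ^ 2)) :=
    ((Real.summable_one_div_nat_pow (p := 2)).mpr one_lt_two).mul_left 4
  have base1 : Summable (fun n : ℕ => 4 * (1 / (((n : ℝ) + 1)) ^ 2)) := by
    have := (summable_nat_add_iff (f := fun n : ℕ => 4 * (1 / ((n : ℝ)) ^ 2)) 1).mpr base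
    simpa [Nat.cast_add] using this
  have hnat : Summable (fun n : ℕ => 4 / (((n : ℕ) : ℝ) ^ 2 + 1)) := by
    rw [← summable_nat_add_iff 1]
    apply Summable.of_nonneg_of_le (fun n => by positivity) (fun n => ?_) base1
    push_cast
    rw [mul_one_div, div_le_div_iff₀ (by positivity) (by positivity)]
    nlinarith [Nat.cast_nonneg (α := ℝ) n]
  apply Summable.of_nat_of_neg
  · exact hnat.congr fun n => by push_cast; ring
  · exact hnat.congr fun n => by push_cast; ring

/-- AM-GM for reciprocals. -/
lemma amgm_recip (X Y : ℝ) (hX : 0 < X) (hY : 0 < Y) :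
    1 / (X * Y) ≤ 1 / 2 * (1 / X ^ 2 + 1 / Y ^ 2) := by
  have h : 1 / (X * Y) = 1 / X * (1 / Y) := by
    rw [div_mul_div_comm, one_mul]
  have h2 : 1 / X ^ 2 = (1 / X) ^ 2 := by rw [div_pow, one_pow]
  have h3 : 1 / Y ^ 2 = (1 / Y) ^ 2 := by rw [div_pow, one_pow]
  rw [h, h2, h3]
  nlinarith [sq_nonneg (1 / X - 1 / Y)]

/-- Piecewise bound, `b` part. -/
noncomputable def Xf (q : ℤ → ℂ) (N : ℕ) (y : ℝ) (k : ℤ) : ℝ :=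
  if (k : ℝ) ^ 2 ≤ (N : ℝ) then (N : ℝ) * ‖q k‖ ^ 2 * bN N y
  else if (k : ℝ) ^ 2 ≤ 16 * (N : ℝ) ^ 2 then 16 * (N : ℝ) ^ 2 * ‖q k‖ ^ 2 * bN N y
  else 0

/-- Piecewise bound, `a` part. -/
noncomputable def Yf (q : ℤ → ℂ) (N : ℕ) (y : ℝ) (k : ℤ) : ℝ :=
  if (k : ℝ) ^ 2 ≤ (N : ℝ) then 0
  else if (k : ℝ) ^ 2 ≤ 16 * (N : ℝ) ^ 2 then 0
  else if (k : ℝ) ^ 2 ≤ Real.sqrt |y| then ‖q k‖ ^ 2 * aN N y / Real.sqrt |y|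
  else 16 * ‖q k‖ ^ 2 * aN N y

/-- Relaxed bound, `b` part. -/
noncomputable def Xg (q : ℤ → ℂ) (N : ℕ) (y : ℝ) (k : ℤ) : ℝ :=
  ((N : ℝ) * ‖q k‖ ^ 2 +
    16 * (N : ℝ) ^ 2 * (if Real.sqrt N ≤ |(k : ℝ)| then ‖q k‖ ^ 2 else 0)) * bN N y

/-- Relaxed bound, `a` part. -/
noncomputable def Yg (q : ℤ → ℂ) (N : ℕ) (y : ℝ) (k : ℤ) : ℝ :=
  (1 / Real.sqrt |y| * ‖q k‖ ^ 2 +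
    16 * (if |y| ^ ((1 : ℝ) / 4) ≤ |(k : ℝ)| then ‖q k‖ ^ 2 else 0)) * aN N y


set_option maxHeartbeats 1000000 in
theorem stmt12 (q : ℤ → ℂ) (hq : Summable fun k : ℤ => ‖q k‖ ^ 2)
    (N : ℕ) (hN : 5 ≤ N) (y : ℝ) (hy : (N : ℝ) ^ 8 ≤ |y|) :
    psi q N y ≤
      (N : ℝ) ^ 2 * (l2norm q ^ 2 / N + 16 * tailE q (Real.sqrt N) ^ 2) * bN N y +
        (l2norm q ^ 2 / Real.sqrt |y| + 16 * tailE q (|y| ^ ((1 : ℝ) / 4)) ^ 2) * aN N y := by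
  have hN5 : (5 : ℝ) ≤ (N : ℝ) := by exact_mod_cast hN
  have hN1 : (1 : ℝ) ≤ (N : ℝ) := by linarith
  have hNpow : (1 : ℝ) ≤ (N : ℝ) ^ 8 := one_le_pow₀ hN1
  have hy1 : (1 : ℝ) ≤ |y| := le_trans hNpow hy
  have hy0 : (0 : ℝ) < |y| := lt_of_lt_of_le zero_lt_one hy1
  have him : ∀ j : ℤ, (lam N y - (j : ℂ) ^ 2).im = y := by
    intro j; simp [lam, sq]
  have hre : ∀ j : ℤ, (lam N y - (j : ℂ) ^ 2).re = ((N : ℝ) ^ 2 + N) - (j : ℝ) ^ 2 := by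
    intro j; simp [lam, sq]
  have h1 : ∀ j : ℤ, |y| ≤ Af N y j := by
    intro j
    have := Complex.abs_im_le_norm (lam N y - (j : ℂ) ^ 2)
    rwa [him j] at this
  have h2 : ∀ j : ℤ, |((N : ℝ) ^ 2 + N) - (j : ℝ) ^ 2| ≤ Af N y j := by
    intro j
    have := Complex.abs_re_le_norm (lam N y - (j : ℂ) ^ 2)
    rwa [hre j] at this
  have hApos : ∀ j : ℤ, 0 < Af N y j := fun j => lt_of_lt_of_le hy0 (h1 j)
  have hN6 : (1 : ℝ) ≤ (N : ℝ) ^ 6 := one_le_pow₀ hN1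
  have h56 : (5 : ℝ) ^ 6 ≤ (N : ℝ) ^ 6 := by
    apply pow_le_pow_left₀ (by norm_num) hN5
  have hN8' : (N : ℝ) ^ 2 + 1 ≤ (N : ℝ) ^ 8 := by
    nlinarith [mul_le_mul_of_nonneg_left h56 (sq_nonneg (N : ℝ)), hN1, sq_nonneg (N : ℝ)]
  -- the majorant bound
  have hA4 : ∀ j : ℤ, ((j : ℝ) ^ 2 + 1) ≤ 4 * Af N y j := by
    intro j
    rcases le_or_gt ((j : ℝ) ^ 2) (4 * (N : ℝ) ^ 2) with h | h
    · have hj := h1 j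
      nlinarith [hy, hN8', hN5]
    · have hj := h2 j
      have habs : (j : ℝ) ^ 2 - ((N : ℝ) ^ 2 + N) ≤ |((N : ℝ) ^ 2 + N) - (j : ℝ) ^ 2| := by
        rw [abs_sub_comm]; exact le_abs_self _
      nlinarith [hN5]
  have haS : Summable (fun j : ℤ => 1 / Af N y j) := by
    apply Summable.of_nonneg_of_le (fun j => div_nonneg zero_le_one (hApos j).le)
      (fun j => ?_) majorant_summable
    rw [div_le_div_iff₀ (hApos j) (by positivity)]
    nlinarith [hA4 j]
  have hbS : Summable (fun j : ℤ => 1 / Af N y j ^ 2) := by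
    apply Summable.of_nonneg_of_le (fun j => div_nonneg zero_le_one (sq_nonneg _)) (fun j => ?_) haS
    rw [div_le_div_iff₀ (pow_pos (hApos j) 2) (hApos j)]
    nlinarith [h1 j, hy1, hApos j]
  have haNd : aN N y = ∑' j : ℤ, 1 / Af N y j := rfl
  have hbNd : bN N y = ∑' j : ℤ, 1 / Af N y j ^ 2 := rfl
  have ha0 : 0 ≤ aN N y := by
    rw [haNd]; exact tsum_nonneg fun k => div_nonneg zero_le_one (hApos k).le
  have hb0 : 0 ≤ bN N y := by
    rw [hbNd]; exact tsum_nonneg fun k => div_nonneg zero_le_one (sq_nonneg _)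
  -- shifts
  have hshiftS : ∀ (k : ℤ) (f : ℤ → ℝ), Summable f → Summable (fun m => f (m + k)) := by
    intro k f hf
    simpa [Function.comp_def] using (Equiv.addRight k).summable_iff.mpr hf
  have hshiftT : ∀ (k : ℤ) (f : ℤ → ℝ), (∑' m, f (m + k)) = ∑' m, f m := by
    intro k f
    simpa using (Equiv.addRight k).tsum_eq f
  -- the inner sums S k
  have hSpt0 : ∀ k m : ℤ, 0 ≤ 1 / (Af N y (m + k) * Af N y m) := by
    intro k m
    exact div_nonneg zero_le_one (mul_pos (hApos (m + k)) (hApos m)).le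
  have hSptb : ∀ k m : ℤ, 1 / (Af N y (m + k) * Af N y m) ≤
      1 / 2 * (1 / Af N y (m + k) ^ 2 + 1 / Af N y m ^ 2) :=
    fun k m => amgm_recip _ _ (hApos (m + k)) (hApos m)
  have hSmaj : ∀ k : ℤ, Summable (fun m : ℤ =>
      1 / 2 * (1 / Af N y (m + k) ^ 2 + 1 / Af N y m ^ 2)) := by
    intro k
    exact ((hshiftS k _ hbS).add hbS).mul_left (1 / 2)
  have hSsum : ∀ k : ℤ, Summable (fun m : ℤ => 1 / (Af N y (m + k) * Af N y m)) := by
    intro k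
    exact Summable.of_nonneg_of_le (hSpt0 k) (hSptb k) (hSmaj k)
  have hS0 : ∀ k : ℤ, 0 ≤ ∑' m : ℤ, 1 / (Af N y (m + k) * Af N y m) :=
    fun k => tsum_nonneg (hSpt0 k)
  have hS_b : ∀ k : ℤ, (∑' m : ℤ, 1 / (Af N y (m + k) * Af N y m)) ≤ bN N y := by
    intro k
    have step := Summable.tsum_le_tsum (hSptb k) (hSsum k) (hSmaj k)
    rw [tsum_mul_left, Summable.tsum_add (hshiftS k _ hbS) hbS,
      hshiftT k (fun m => 1 / Af N y m ^ 2)] at step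
    rw [hbNd]; linarith
  have hS_a : ∀ k : ℤ, (∑' m : ℤ, 1 / (Af N y (m + k) * Af N y m)) ≤ aN N y / |y| := by
    intro k
    have pt : ∀ m : ℤ, 1 / (Af N y (m + k) * Af N y m) ≤ 1 / |y| * (1 / Af N y m) := by
      intro m
      have e : 1 / (Af N y (m + k) * Af N y m) = 1 / Af N y (m + k) * (1 / Af N y m) := by
        rw [div_mul_div_comm, one_mul]
      rw [e]
      apply mul_le_mul_of_nonneg_right _ (div_nonneg zero_le_one (hApos m).le)
      rw [div_le_div_iff₀ (hApos (m + k)) hy0]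
      nlinarith [h1 (m + k)]
    have step := Summable.tsum_le_tsum pt (hSsum k) (haS.mul_left (1 / |y|))
    rw [tsum_mul_left] at step
    rw [haNd]
    calc (∑' m : ℤ, 1 / (Af N y (m + k) * Af N y m))
        ≤ 1 / |y| * ∑' j : ℤ, 1 / Af N y j := step
      _ = (∑' j : ℤ, 1 / Af N y j) / |y| := by ring
  have hS_a16 : ∀ k : ℤ, 8 * ((N : ℝ) ^ 2 + N) ≤ (k : ℝ) ^ 2 →
      (∑' m : ℤ, 1 / (Af N y (m + k) * Af N y m)) ≤ 16 * aN N y / (k : ℝ) ^ 2 := by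
    intro k hk
    have hk0 : (0 : ℝ) < (k : ℝ) ^ 2 := by nlinarith
    have pt : ∀ m : ℤ, 1 / (Af N y (m + k) * Af N y m) ≤
        8 / (k : ℝ) ^ 2 * (1 / Af N y (m + k) + 1 / Af N y m) := by
      intro m
      have htri : |(k : ℝ)| ≤ |((m + k : ℤ) : ℝ)| + |(m : ℝ)| := by
        have : (k : ℝ) = ((m + k : ℤ) : ℝ) - (m : ℝ) := by push_cast; ring
        rw [this]
        exact abs_sub _ _
      have e : 1 / (Af N y (m + k) * Af N y m) = 1 / Af N y (m + k) * (1 / Af N y m) := by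
        rw [div_mul_div_comm, one_mul]
      rcases le_total |((m + k : ℤ) : ℝ)| |(m : ℝ)| with hc | hc
      · -- |m| is large
        have hm2 : (k : ℝ) ^ 2 / 4 ≤ (m : ℝ) ^ 2 := by
          nlinarith [sq_abs ((m : ℝ)), sq_abs ((k : ℝ)), abs_nonneg ((k : ℝ)), abs_nonneg ((m : ℝ))]
        have habs : (m : ℝ) ^ 2 - ((N : ℝ) ^ 2 + N) ≤ |((N : ℝ) ^ 2 + N) - (m : ℝ) ^ 2| := by
          rw [abs_sub_comm]; exact le_abs_self _
        have hAm : (k : ℝ) ^ 2 / 8 ≤ Af N y m := by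
          have := h2 m; linarith
        have h1Y : 1 / Af N y m ≤ 8 / (k : ℝ) ^ 2 := by
          rw [div_le_div_iff₀ (hApos m) hk0]; linarith
        rw [e]
        calc 1 / Af N y (m + k) * (1 / Af N y m)
            ≤ 1 / Af N y (m + k) * (8 / (k : ℝ) ^ 2) := by
              apply mul_le_mul_of_nonneg_left h1Y (div_nonneg zero_le_one (hApos _).le)
          _ ≤ 8 / (k : ℝ) ^ 2 * (1 / Af N y (m + k) + 1 / Af N y m) := by
              rw [mul_comm]
              apply mul_le_mul_of_nonneg_left _ (by positivity)
              have h0m : (0:ℝ) ≤ 1 / Af N y m := div_nonneg zero_le_one (hApos m).le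
              linarith
      · -- |m + k| is large
        have hm2 : (k : ℝ) ^ 2 / 4 ≤ ((m + k : ℤ) : ℝ) ^ 2 := by
          nlinarith [sq_abs (((m + k : ℤ) : ℝ)), sq_abs ((k : ℝ)), abs_nonneg ((k : ℝ)),
            abs_nonneg (((m + k : ℤ) : ℝ))]
        have habs : ((m + k : ℤ) : ℝ) ^ 2 - ((N : ℝ) ^ 2 + N) ≤
            |((N : ℝ) ^ 2 + N) - ((m + k : ℤ) : ℝ) ^ 2| := by
          rw [abs_sub_comm]; exact le_abs_self _
        have hAm : (k : ℝ) ^ 2 / 8 ≤ Af N y (m + k) := by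
          have := h2 (m + k); linarith
        have h1X : 1 / Af N y (m + k) ≤ 8 / (k : ℝ) ^ 2 := by
          rw [div_le_div_iff₀ (hApos (m + k)) hk0]; linarith
        rw [e]
        calc 1 / Af N y (m + k) * (1 / Af N y m)
            ≤ 8 / (k : ℝ) ^ 2 * (1 / Af N y m) := by
              apply mul_le_mul_of_nonneg_right h1X (div_nonneg zero_le_one (hApos m).le)
          _ ≤ 8 / (k : ℝ) ^ 2 * (1 / Af N y (m + k) + 1 / Af N y m) := by
              apply mul_le_mul_of_nonneg_left _ (by positivity)
              have h0x : (0:ℝ) ≤ 1 / Af N y (m + k) := div_nonneg zero_le_one (hApos _).le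
              linarith
    have hmajsum : Summable (fun m : ℤ =>
        8 / (k : ℝ) ^ 2 * (1 / Af N y (m + k) + 1 / Af N y m)) :=
      ((hshiftS k _ haS).add haS).mul_left _
    have step := Summable.tsum_le_tsum pt (hSsum k) hmajsum
    rw [tsum_mul_left, Summable.tsum_add (hshiftS k _ haS) haS,
      hshiftT k (fun m => 1 / Af N y m)] at step
    rw [haNd]
    calc (∑' m : ℤ, 1 / (Af N y (m + k) * Af N y m))
        ≤ 8 / (k : ℝ) ^ 2 * ((∑' j : ℤ, 1 / Af N y j) + ∑' j : ℤ, 1 / Af N y j) := step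
      _ = 16 * (∑' j : ℤ, 1 / Af N y j) / (k : ℝ) ^ 2 := by ring
    -- rewrite psi as an iterated sum
  have hpsi : psi q N y = ∑' p : ℤ × ℤ, Ff q N y p := rfl
  have hFe : ∀ k m : ℤ, Ff q N y (shiftEquiv' (k, m)) =
      (k : ℝ) ^ 2 * ‖q k‖ ^ 2 * (1 / (Af N y (m + k) * Af N y m)) := by
    intro k m
    show ((((m + k : ℤ) : ℝ)) - ((m : ℤ) : ℝ)) ^ 2 * ‖q (m + k - m)‖ ^ 2 /
        (Af N y (m + k) * Af N y m) = _
    rw [add_sub_cancel_left, mul_one_div]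
    push_cast
    ring
  have hQ0 : ∀ k : ℤ, (0 : ℝ) ≤ ‖q k‖ ^ 2 := fun k => sq_nonneg _
  have hsqrty : 0 < Real.sqrt |y| := Real.sqrt_pos.mpr hy0
  by_cases hF : Summable (Ff q N y)
  case neg =>
    rw [hpsi, tsum_eq_zero_of_not_summable hF]
    have e1 : 0 ≤ l2norm q ^ 2 / N + 16 * tailE q (Real.sqrt N) ^ 2 := by positivity
    have e2 : 0 ≤ l2norm q ^ 2 / Real.sqrt |y| + 16 * tailE q (|y| ^ ((1 : ℝ) / 4)) ^ 2 := by
      positivity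
    have t1 := mul_nonneg (mul_nonneg (sq_nonneg ((N : ℝ))) e1) hb0
    have t2 := mul_nonneg e2 ha0
    linarith
  case pos =>
  have hFeS : Summable (Ff q N y ∘ shiftEquiv') := (shiftEquiv'.summable_iff).mpr hF
  have hslice : ∀ k : ℤ, Summable fun m : ℤ => Ff q N y (shiftEquiv' (k, m)) := fun k =>
    hFeS.prod_factor k
  have hrw : psi q N y = ∑' k : ℤ, ∑' m : ℤ, Ff q N y (shiftEquiv' (k, m)) := by
    rw [hpsi, ← shiftEquiv'.tsum_eq (Ff q N y)]
    exact Summable.tsum_prod' hFeS hslice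
  have hinner : ∀ k : ℤ, (∑' m : ℤ, Ff q N y (shiftEquiv' (k, m))) =
      (k : ℝ) ^ 2 * ‖q k‖ ^ 2 * ∑' m : ℤ, 1 / (Af N y (m + k) * Af N y m) := by
    intro k
    rw [tsum_congr (hFe k), tsum_mul_left]
  -- pointwise bound over k
  have hXY : ∀ k : ℤ, (k : ℝ) ^ 2 * ‖q k‖ ^ 2 *
      (∑' m : ℤ, 1 / (Af N y (m + k) * Af N y m)) ≤ Xf q N y k + Yf q N y k := by
    intro k
    unfold Xf Yf
    split_ifs with e1 e2 e3
    · rw [add_zero]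
      exact mul_le_mul (mul_le_mul_of_nonneg_right e1 (hQ0 k)) (hS_b k) (hS0 k)
        (mul_nonneg (by linarith) (hQ0 k))
    · rw [add_zero]
      exact mul_le_mul (mul_le_mul_of_nonneg_right e2 (hQ0 k)) (hS_b k) (hS0 k)
        (mul_nonneg (by positivity) (hQ0 k))
    · rw [zero_add]
      have step1 : (k : ℝ) ^ 2 * ‖q k‖ ^ 2 *
          (∑' m : ℤ, 1 / (Af N y (m + k) * Af N y m)) ≤
          (k : ℝ) ^ 2 * ‖q k‖ ^ 2 * (aN N y / |y|) :=
        mul_le_mul_of_nonneg_left (hS_a k) (mul_nonneg (sq_nonneg _) (hQ0 k))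
      have step2 : (k : ℝ) ^ 2 * ‖q k‖ ^ 2 * (aN N y / |y|) ≤
          Real.sqrt |y| * ‖q k‖ ^ 2 * (aN N y / |y|) :=
        mul_le_mul_of_nonneg_right (mul_le_mul_of_nonneg_right e3 (hQ0 k))
          (div_nonneg ha0 hy0.le)
      have step3 : Real.sqrt |y| * ‖q k‖ ^ 2 * (aN N y / |y|) =
          ‖q k‖ ^ 2 * aN N y / Real.sqrt |y| := by
        have hss : Real.sqrt |y| * Real.sqrt |y| = |y| := Real.mul_self_sqrt hy0.le
        field_simp
        linear_combination (‖q k‖ ^ 2 * aN N y) * hss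
      linarith
    · rw [zero_add]
      have hky : Real.sqrt |y| < (k : ℝ) ^ 2 := not_le.mp e3
      have h8 : 8 * ((N : ℝ) ^ 2 + N) ≤ (k : ℝ) ^ 2 := by
        have h4 : ((N : ℝ) ^ 4) ^ 2 ≤ |y| := by nlinarith [hy]
        have hs : (N : ℝ) ^ 4 ≤ Real.sqrt |y| := by
          calc (N : ℝ) ^ 4 = Real.sqrt (((N : ℝ) ^ 4) ^ 2) := (Real.sqrt_sq (by positivity)).symm
            _ ≤ Real.sqrt |y| := Real.sqrt_le_sqrt h4
        have hc1 : (0:ℝ) ≤ (N : ℝ) ^ 3 * ((N : ℝ) - 5) := mul_nonneg (by positivity) (by linarith)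
        have hc2 : (0:ℝ) ≤ (N : ℝ) ^ 2 * ((N : ℝ) - 5) := mul_nonneg (by positivity) (by linarith)
        have hc3 : (0:ℝ) ≤ (N : ℝ) * ((N : ℝ) - 5) := mul_nonneg (by linarith) (by linarith)
        nlinarith [hc1, hc2, hc3, hs, hky]
      have hk0 : (0 : ℝ) < (k : ℝ) ^ 2 := lt_trans hsqrty hky
      have step1 := mul_le_mul_of_nonneg_left (hS_a16 k h8)
        (mul_nonneg (sq_nonneg ((k : ℝ))) (hQ0 k))
      have step2 : (k : ℝ) ^ 2 * ‖q k‖ ^ 2 * (16 * aN N y / (k : ℝ) ^ 2) =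
          16 * ‖q k‖ ^ 2 * aN N y := by
        rw [mul_div_assoc', div_eq_iff hk0.ne']
        ring
      linarith
  -- nonnegativity and comparisons
  have hind1_0 : ∀ k : ℤ,
      (0:ℝ) ≤ (if Real.sqrt N ≤ |(k : ℝ)| then ‖q k‖ ^ 2 else 0) := by
    intro k; split_ifs
    · exact hQ0 k
    · exact le_refl 0
  have hind2_0 : ∀ k : ℤ,
      (0:ℝ) ≤ (if |y| ^ ((1 : ℝ) / 4) ≤ |(k : ℝ)| then ‖q k‖ ^ 2 else 0) := by
    intro k; split_ifs
    · exact hQ0 k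
    · exact le_refl 0
  have hind1sum : Summable (fun k : ℤ =>
      if Real.sqrt N ≤ |(k : ℝ)| then ‖q k‖ ^ 2 else 0) := by
    apply Summable.of_nonneg_of_le hind1_0 (fun k => ?_) hq
    split_ifs
    · exact le_refl _
    · exact hQ0 k
  have hind2sum : Summable (fun k : ℤ =>
      if |y| ^ ((1 : ℝ) / 4) ≤ |(k : ℝ)| then ‖q k‖ ^ 2 else 0) := by
    apply Summable.of_nonneg_of_le hind2_0 (fun k => ?_) hq
    split_ifs
    · exact le_refl _
    · exact hQ0 k
  have hX0 : ∀ k : ℤ, 0 ≤ Xf q N y k := by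
    intro k; unfold Xf; split_ifs
    · exact mul_nonneg (mul_nonneg (by linarith) (hQ0 k)) hb0
    · exact mul_nonneg (mul_nonneg (by positivity) (hQ0 k)) hb0
    · exact le_refl 0
  have hY0 : ∀ k : ℤ, 0 ≤ Yf q N y k := by
    intro k; unfold Yf; split_ifs
    · exact le_refl 0
    · exact le_refl 0
    · exact div_nonneg (mul_nonneg (hQ0 k) ha0) hsqrty.le
    · exact mul_nonneg (mul_nonneg (by norm_num) (hQ0 k)) ha0
  have hXX : ∀ k : ℤ, Xf q N y k ≤ Xg q N y k := by
    intro k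
    unfold Xf Xg
    rcases le_or_gt (Real.sqrt (N : ℝ)) |(k : ℝ)| with hind | hind
    · rw [if_pos hind]
      split_ifs with e1 e2
      · exact mul_le_mul_of_nonneg_right (le_add_of_nonneg_right (by positivity)) hb0
      · exact mul_le_mul_of_nonneg_right (le_add_of_nonneg_left
          (mul_nonneg (by linarith) (hQ0 k))) hb0
      · exact mul_nonneg (add_nonneg (mul_nonneg (by linarith) (hQ0 k))
          (by positivity)) hb0
    · rw [if_neg (not_le.mpr hind)]
      split_ifs with e1 e2
      · exact le_of_eq (by ring)
      · exfalso
        have hkN : Real.sqrt (N : ℝ) ≤ |(k : ℝ)| := by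
          calc Real.sqrt (N : ℝ) ≤ Real.sqrt ((k : ℝ) ^ 2) :=
                Real.sqrt_le_sqrt (le_of_lt (not_le.mp e1))
            _ = |(k : ℝ)| := Real.sqrt_sq_eq_abs _
        linarith
      · exact mul_nonneg (add_nonneg (mul_nonneg (by linarith) (hQ0 k))
          (by norm_num)) hb0
  have hrpow : |y| ^ ((1 : ℝ) / 4) = Real.sqrt (Real.sqrt |y|) := by
    rw [Real.sqrt_eq_rpow, Real.sqrt_eq_rpow, ← Real.rpow_mul (abs_nonneg y)]
    norm_num
  have hYY : ∀ k : ℤ, Yf q N y k ≤ Yg q N y k := by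
    intro k
    unfold Yf Yg
    rcases le_or_gt (|y| ^ ((1 : ℝ) / 4)) |(k : ℝ)| with hind | hind
    · rw [if_pos hind]
      split_ifs with e1 e2 e3
      · exact mul_nonneg (add_nonneg (mul_nonneg (by positivity) (hQ0 k))
          (mul_nonneg (by norm_num) (hQ0 k))) ha0
      · exact mul_nonneg (add_nonneg (mul_nonneg (by positivity) (hQ0 k))
          (mul_nonneg (by norm_num) (hQ0 k))) ha0
      · calc ‖q k‖ ^ 2 * aN N y / Real.sqrt |y| =
              1 / Real.sqrt |y| * ‖q k‖ ^ 2 * aN N y := by ring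
          _ ≤ (1 / Real.sqrt |y| * ‖q k‖ ^ 2 + 16 * ‖q k‖ ^ 2) *
              aN N y := mul_le_mul_of_nonneg_right (le_add_of_nonneg_right
                (mul_nonneg (by norm_num) (hQ0 k))) ha0
      · exact mul_le_mul_of_nonneg_right (le_add_of_nonneg_left
          (mul_nonneg (by positivity) (hQ0 k))) ha0
    · rw [if_neg (not_le.mpr hind)]
      split_ifs with e1 e2 e3
      · exact mul_nonneg (add_nonneg (mul_nonneg (by positivity) (hQ0 k))
          (by norm_num)) ha0
      · exact mul_nonneg (add_nonneg (mul_nonneg (by positivity) (hQ0 k))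
          (by norm_num)) ha0
      · exact le_of_eq (by ring)
      · exfalso
        have hky : Real.sqrt |y| < (k : ℝ) ^ 2 := not_le.mp e3
        have hq4 : |y| ^ ((1 : ℝ) / 4) ≤ |(k : ℝ)| := by
          rw [hrpow]
          calc Real.sqrt (Real.sqrt |y|) ≤ Real.sqrt ((k : ℝ) ^ 2) :=
                Real.sqrt_le_sqrt hky.le
            _ = |(k : ℝ)| := Real.sqrt_sq_eq_abs _
        linarith
  have hXgsum : Summable (Xg q N y) := by
    unfold Xg
    exact ((hq.mul_left _).add (hind1sum.mul_left _)).mul_right _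
  have hYgsum : Summable (Yg q N y) := by
    unfold Yg
    exact ((hq.mul_left _).add (hind2sum.mul_left _)).mul_right _
  have hXsum : Summable (Xf q N y) := Summable.of_nonneg_of_le hX0 hXX hXgsum
  have hYsum : Summable (Yf q N y) := Summable.of_nonneg_of_le hY0 hYY hYgsum
  have hXgtsum : ∑' k : ℤ, Xg q N y k =
      ((N : ℝ) * (∑' k : ℤ, ‖q k‖ ^ 2) +
        16 * (N : ℝ) ^ 2 * (∑' k : ℤ, if Real.sqrt N ≤ |(k : ℝ)| then
          ‖q k‖ ^ 2 else 0)) * bN N y := by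
    unfold Xg
    rw [tsum_mul_right, Summable.tsum_add (hq.mul_left _) (hind1sum.mul_left _), tsum_mul_left,
      tsum_mul_left]
  have hYgtsum : ∑' k : ℤ, Yg q N y k =
      (1 / Real.sqrt |y| * (∑' k : ℤ, ‖q k‖ ^ 2) +
        16 * (∑' k : ℤ, if |y| ^ ((1 : ℝ) / 4) ≤ |(k : ℝ)| then
          ‖q k‖ ^ 2 else 0)) * aN N y := by
    unfold Yg
    rw [tsum_mul_right, Summable.tsum_add (hq.mul_left _) (hind2sum.mul_left _), tsum_mul_left,
      tsum_mul_left]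
  have hl2 : l2norm q ^ 2 = ∑' k : ℤ, ‖q k‖ ^ 2 :=
    Real.sq_sqrt (tsum_nonneg fun k => hQ0 k)
  have ht1 : tailE q (Real.sqrt N) ^ 2 =
      ∑' k : ℤ, (if Real.sqrt N ≤ |(k : ℝ)| then ‖q k‖ ^ 2 else 0) :=
    Real.sq_sqrt (tsum_nonneg hind1_0)
  have ht2 : tailE q (|y| ^ ((1 : ℝ) / 4)) ^ 2 =
      ∑' k : ℤ, (if |y| ^ ((1 : ℝ) / 4) ≤ |(k : ℝ)| then ‖q k‖ ^ 2 else 0) :=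
    Real.sq_sqrt (tsum_nonneg hind2_0)
  -- assemble
  have hg0 : ∀ k : ℤ, 0 ≤ ∑' m : ℤ, Ff q N y (shiftEquiv' (k, m)) := by
    intro k; rw [hinner k]
    exact mul_nonneg (mul_nonneg (sq_nonneg _) (hQ0 k)) (hS0 k)
  have hgle : ∀ k : ℤ, (∑' m : ℤ, Ff q N y (shiftEquiv' (k, m))) ≤ Xf q N y k + Yf q N y k := by
    intro k; rw [hinner k]; exact hXY k
  have hgsum : Summable (fun k : ℤ => ∑' m : ℤ, Ff q N y (shiftEquiv' (k, m))) :=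
    Summable.of_nonneg_of_le hg0 hgle (hXsum.add hYsum)
  have main : psi q N y ≤ (∑' k : ℤ, Xf q N y k) + ∑' k : ℤ, Yf q N y k := by
    rw [hrw, ← Summable.tsum_add hXsum hYsum]
    exact Summable.tsum_le_tsum hgle hgsum (hXsum.add hYsum)
  have hXle : (∑' k : ℤ, Xf q N y k) ≤ ∑' k : ℤ, Xg q N y k :=
    Summable.tsum_le_tsum hXX hXsum hXgsum
  have hYle : (∑' k : ℤ, Yf q N y k) ≤ ∑' k : ℤ, Yg q N y k :=
    Summable.tsum_le_tsum hYY hYsum hYgsum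
  have hNne : (N : ℝ) ≠ 0 := by linarith
  have c1 : (N : ℝ) ^ 2 * (l2norm q ^ 2 / N + 16 * tailE q (Real.sqrt N) ^ 2) =
      (N : ℝ) * l2norm q ^ 2 + 16 * (N : ℝ) ^ 2 * tailE q (Real.sqrt N) ^ 2 := by
    field_simp
  calc psi q N y ≤ (∑' k : ℤ, Xf q N y k) + ∑' k : ℤ, Yf q N y k := main
    _ ≤ (∑' k : ℤ, Xg q N y k) + ∑' k : ℤ, Yg q N y k := add_le_add hXle hYle
    _ = ((N : ℝ) * l2norm q ^ 2 + 16 * (N : ℝ) ^ 2 * tailE q (Real.sqrt N) ^ 2) * bN N y +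
        (1 / Real.sqrt |y| * l2norm q ^ 2 + 16 * tailE q (|y| ^ ((1 : ℝ) / 4)) ^ 2) * aN N y := by
      rw [hXgtsum, hYgtsum, hl2, ht1, ht2]
    _ = (N : ℝ) ^ 2 * (l2norm q ^ 2 / N + 16 * tailE q (Real.sqrt N) ^ 2) * bN N y +
        (l2norm q ^ 2 / Real.sqrt |y| + 16 * tailE q (|y| ^ ((1 : ℝ) / 4)) ^ 2) * aN N y := by
      rw [c1]
      ring
end

section
/- Let N be a positive integer, y ∈ ℝ, and set λ = N² + N + iy. Then for all integers m, s with |s| > 4N, one has s² / ( |λ − (m + s)²| · |λ − m²| ) ≤ 8/|λ − m²| + 8/|λ − (m + s)²|. -/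
lemma lam_lb (N : ℕ) (hN : 0 < N) (y : ℝ) (k : ℤ) :
    1 ≤ ‖lam N y - (k : ℂ) ^ 2‖ ∧
    (k : ℝ) ^ 2 - ((N : ℝ) ^ 2 + N) ≤ ‖lam N y - (k : ℂ) ^ 2‖ := by
  have hre : (lam N y - (k : ℂ) ^ 2).re = (N : ℝ) ^ 2 + N - (k : ℝ) ^ 2 := by
    simp [lam, Complex.sub_re, Complex.add_re, sq, Complex.mul_re]
  have h1 := Complex.abs_re_le_norm (lam N y - (k : ℂ) ^ 2)
  rw [hre] at h1
  have hne : (N : ℤ) ^ 2 + N - k ^ 2 ≠ 0 := by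
    intro h
    have hk : k ^ 2 = (N : ℤ) ^ 2 + N := by omega
    have ha : |k| ^ 2 = (N : ℤ) ^ 2 + N := by rw [sq_abs]; exact hk
    have hN' : (0 : ℤ) < N := by exact_mod_cast hN
    rcases le_or_gt (|k|) (N : ℤ) with h' | h'
    · nlinarith [abs_nonneg k]
    · nlinarith [abs_nonneg k]
  have h2 : (1 : ℤ) ≤ |(N : ℤ) ^ 2 + N - k ^ 2| := Int.one_le_abs hne
  have h3 : (1 : ℝ) ≤ |(N : ℝ) ^ 2 + N - (k : ℝ) ^ 2| := by
    exact_mod_cast h2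
  refine ⟨le_trans h3 h1, le_trans ?_ h1⟩
  rw [abs_sub_comm]
  exact le_abs_self _

theorem stmt13 (N : ℕ) (hN : 0 < N) (y : ℝ) (m s : ℤ) (hs : 4 * (N : ℤ) < |s|) :
    (s : ℝ) ^ 2 /
        (‖lam N y - ((m + s : ℤ) : ℂ) ^ 2‖ * ‖lam N y - (m : ℂ) ^ 2‖) ≤
      8 / ‖lam N y - (m : ℂ) ^ 2‖ +
        8 / ‖lam N y - ((m + s : ℤ) : ℂ) ^ 2‖ := by
  obtain ⟨hA1, hA2⟩ := lam_lb N hN y (m + s)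
  obtain ⟨hB1, hB2⟩ := lam_lb N hN y m
  set A := ‖lam N y - ((m + s : ℤ) : ℂ) ^ 2‖ with hAdef
  set B := ‖lam N y - (m : ℂ) ^ 2‖ with hBdef
  have hA0 : (0 : ℝ) < A := lt_of_lt_of_le one_pos hA1
  have hB0 : (0 : ℝ) < B := lt_of_lt_of_le one_pos hB1
  have hsr : 4 * (N : ℝ) + 1 ≤ |(s : ℝ)| := by
    have h' : 4 * (N : ℤ) + 1 ≤ |s| := hs
    exact_mod_cast h'
  have key : (s : ℝ) ^ 2 ≤ 8 * B + 8 * A := by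
    have h1 : ((m : ℝ) + s) ^ 2 - ((N : ℝ) ^ 2 + N) ≤ A := by
      push_cast at hA2; linarith
    have habs : |(s : ℝ)| ^ 2 = (s : ℝ) ^ 2 := sq_abs _
    nlinarith [sq_nonneg (2 * (m : ℝ) + s), abs_nonneg (s : ℝ), sq_nonneg (|(s : ℝ)| - 1), Nat.cast_nonneg (α := ℝ) N]
  rw [div_add_div _ _ hB0.ne' hA0.ne', div_le_div_iff₀ (by positivity) (by positivity)]
  nlinarith [mul_nonneg (mul_nonneg (sub_nonneg.2 key) hA0.le) hB0.le, mul_pos hA0 hB0]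
end

section
/- For every a with 1 ≤ a ≤ 2 there exists a constant C = C(a) > 0 such that for every square-summable sequence q = (q(k))_{k ∈ ℤ} of complex numbers and every integer N ≥ 2: σ₁(a, N) ≤ C · ( N^{−a/2} · ∑_{k=0}^{N} E_{N+1−k}(q)^a + E_N(q)^a · N^{1 − a/2} ) when 1 ≤ a < 2, and σ₁(2, N) ≤ C · ( N^{−1} · ∑_{k=0}^{N} E_{N+1−k}(q)² + E_N(q)² · log N ) when a = 2. -/
/-- `σ₁(a,N) = ∑_{|k| ≤ N} ( ∑_{|j| > N} |q(j−k)|/|j+k| )^a`. -/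
noncomputable def sigma1 (q : ℤ → ℂ) (a : ℝ) (N : ℕ) : ℝ :=
  ∑ k ∈ Finset.Icc (-(N : ℤ)) (N : ℤ),
    (∑' j : ℤ, if (N : ℤ) < |j| then ‖q (j - k)‖ / |(j : ℝ) + (k : ℝ)| else 0) ^ a

/-- `σ₂(a,N) = ∑_{|k| > N} ( ∑_{|j| ≤ N} |q(j−k)|/|j+k| )^a`. -/
noncomputable def sigma2 (q : ℤ → ℂ) (a : ℝ) (N : ℕ) : ℝ :=
  ∑' k : ℤ,
    if (N : ℤ) < |k| then
      (∑ j ∈ Finset.Icc (-(N : ℤ)) (N : ℤ),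
        ‖q (j - k)‖ / |(j : ℝ) + (k : ℝ)|) ^ a
    else 0

open Finset Real

lemma summable_mul_of_sq {f g : ℤ → ℝ} (hf0 : ∀ i, 0 ≤ f i) (hg0 : ∀ i, 0 ≤ g i)
    (hf : Summable (fun i => f i ^ 2)) (hg : Summable (fun i => g i ^ 2)) :
    Summable (fun i => f i * g i) := by
  refine Summable.of_nonneg_of_le (fun i => mul_nonneg (hf0 i) (hg0 i))
    (fun i => ?_) ((hf.add hg).div_const 2)
  have := sq_nonneg (f i - g i)
  nlinarith [hf0 i, hg0 i]

lemma tsum_cs {f g : ℤ → ℝ} (hf0 : ∀ i, 0 ≤ f i) (hg0 : ∀ i, 0 ≤ g i)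
    (hf : Summable (fun i => f i ^ 2)) (hg : Summable (fun i => g i ^ 2)) :
    ∑' i, f i * g i ≤ Real.sqrt (∑' i, f i ^ 2) * Real.sqrt (∑' i, g i ^ 2) := by
  refine Summable.tsum_le_of_sum_le (summable_mul_of_sq hf0 hg0 hf hg) (fun s => ?_)
  refine (Real.sum_mul_le_sqrt_mul_sqrt s f g).trans ?_
  have h1 := Summable.sum_le_tsum s (fun i _ => sq_nonneg (f i)) hf
  have h2 := Summable.sum_le_tsum s (fun i _ => sq_nonneg (g i)) hg
  exact mul_le_mul (Real.sqrt_le_sqrt h1) (Real.sqrt_le_sqrt h2) (Real.sqrt_nonneg _) (Real.sqrt_nonneg _)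

lemma recip_nat {c : ℝ} (hc : 1 ≤ c) : ∑' n : ℕ, (((n : ℝ) + c)⁻¹) ^ 2 ≤ 2 / c := by
  have hpos : ∀ n : ℕ, (0:ℝ) < (n : ℝ) + c := fun n => by positivity
  have hsum : Summable (fun n : ℕ => (((n : ℝ) + c)⁻¹) ^ 2) := by
    refine Summable.of_nonneg_of_le (fun n => by positivity) (fun n => ?_)
      ((Real.summable_one_div_nat_pow.mpr one_lt_two).comp_injective (add_right_injective 1))
    simp only [Function.comp]
    have hb : ((1+n:ℕ):ℝ) ≤ (n:ℝ)+c := by push_cast; linarith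
    have hb0 : (0:ℝ) < ((1+n:ℕ):ℝ) := by positivity
    rw [one_div, ← inv_pow]
    gcongr
  refine Summable.tsum_le_of_sum_le hsum (fun s => ?_)
  obtain ⟨K, hK⟩ := s.exists_nat_subset_range
  calc ∑ n ∈ s, (((n : ℝ) + c)⁻¹) ^ 2
      ≤ ∑ n ∈ Finset.range K, (((n : ℝ) + c)⁻¹) ^ 2 :=
        Finset.sum_le_sum_of_subset_of_nonneg hK (fun n _ _ => by positivity)
    _ ≤ ∑ n ∈ Finset.range K, 2 * (((n : ℝ) + c)⁻¹ - (((n+1) : ℕ) + c)⁻¹) := by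
        refine Finset.sum_le_sum (fun n _ => ?_)
        have h1 : (0:ℝ) < (n : ℝ) + c := hpos n
        have h2 : (0:ℝ) < ((n:ℝ) + 1) + c := by positivity
        push_cast
        rw [inv_sub_inv (ne_of_gt h1) (ne_of_gt h2)]
        have : ((n:ℝ)+1+c) - ((n:ℝ)+c) = 1 := by ring
        rw [this]
        rw [div_eq_mul_inv, pow_two, ← mul_inv]
        have hle : ((n:ℝ)+c) * ((n:ℝ)+c) ≥ (((n:ℝ)+c) * (((n:ℝ)+1)+c)) / 2 := by nlinarith
        have := inv_anti₀ (by positivity) hle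
        calc (((n:ℝ)+c) * ((n:ℝ)+c))⁻¹ ≤ ((((n:ℝ)+c) * (((n:ℝ)+1)+c)) / 2)⁻¹ := this
          _ = 2 * (1 * (((n:ℝ)+c) * (((n:ℝ)+1)+c))⁻¹) := by field_simp
    _ = 2 * (((0:ℕ):ℝ) + c)⁻¹ - 2 * (((K:ℕ):ℝ) + c)⁻¹ := by
        rw [← Finset.mul_sum, Finset.sum_range_sub' (fun n : ℕ => (((n : ℝ) + c)⁻¹))]
        ring
    _ ≤ 2 / c := by
        have : (0:ℝ) < (K:ℝ) + c := hpos K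
        simp only [Nat.cast_zero, zero_add]
        rw [div_eq_mul_inv]
        have : (0:ℝ) ≤ 2 * (((K:ℝ)) + c)⁻¹ := by positivity
        linarith

lemma summable_recip_nat {c : ℝ} (hc : 1 ≤ c) :
    Summable (fun n : ℕ => (((n : ℝ) + c)⁻¹) ^ 2) := by
  refine Summable.of_nonneg_of_le (fun n => by positivity) (fun n => ?_)
    ((Real.summable_one_div_nat_pow.mpr one_lt_two).comp_injective (add_right_injective 1))
  simp only [Function.comp]
  have hb : ((1+n:ℕ):ℝ) ≤ (n:ℝ)+c := by push_cast; linarith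
  have hb0 : (0:ℝ) < ((1+n:ℕ):ℝ) := by positivity
  rw [one_div, ← inv_pow]
  gcongr

lemma summable_tail (q : ℤ → ℂ) (hq : Summable (fun k : ℤ => ‖q k‖ ^ 2)) (M : ℝ) :
    Summable (fun k : ℤ => if M ≤ |(k : ℝ)| then ‖q k‖ ^ 2 else 0) := by
  refine Summable.of_nonneg_of_le (fun k => ?_) (fun k => ?_) hq
  · split <;> positivity
  · split
    · exact le_refl _
    · positivity

lemma tailE_nonneg (q : ℤ → ℂ) (M : ℝ) : 0 ≤ tailE q M := Real.sqrt_nonneg _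

lemma tailE_sq (q : ℤ → ℂ) (M : ℝ) :
    tailE q M ^ 2 = ∑' k : ℤ, if M ≤ |(k : ℝ)| then ‖q k‖ ^ 2 else 0 := by
  rw [tailE, Real.sq_sqrt]
  exact tsum_nonneg (fun k => by split <;> positivity)

lemma tailE_mono (q : ℤ → ℂ) (hq : Summable (fun k : ℤ => ‖q k‖ ^ 2))
    {M M' : ℝ} (h : M ≤ M') : tailE q M' ≤ tailE q M := by
  refine Real.sqrt_le_sqrt (Summable.tsum_le_tsum (fun k => ?_) (summable_tail q hq M') (summable_tail q hq M))
  split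
  · rename_i hh
    rw [if_pos (h.trans hh)]
  · split <;> positivity

lemma qtail_bound (q : ℤ → ℂ) (hq : Summable (fun k : ℤ => ‖q k‖ ^ 2))
    (N : ℕ) (k : ℤ) (hk : k ≤ (N : ℤ)) :
    ∑' j : ℤ, (if (N : ℤ) < j then ‖q (j - k)‖ ^ 2 else 0)
      ≤ tailE q ((N : ℝ) + 1 - k) ^ 2 := by
  rw [tailE_sq]
  have he : ∑' j : ℤ, (if (N : ℤ) < j then ‖q (j - k)‖ ^ 2 else 0)
      = ∑' m : ℤ, (if (N : ℤ) < m + k then ‖q m‖ ^ 2 else 0) := by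
    rw [← (Equiv.addRight k).tsum_eq
      (fun j => if (N : ℤ) < j then ‖q (j - k)‖ ^ 2 else 0)]
    simp [Equiv.addRight]
  rw [he]
  refine Summable.tsum_le_tsum (fun m => ?_) ?_ (summable_tail q hq _)
  · split
    · rename_i hm
      rw [if_pos]
      have h1 : (N : ℤ) + 1 - k ≤ m := by omega
      have h2 : (0:ℤ) < m := by omega
      have : ((N : ℝ) + 1 - k) ≤ (m : ℝ) := by exact_mod_cast (by exact_mod_cast h1 : ((N:ℤ)+1-k : ℤ) ≤ m)
      calc ((N : ℝ) + 1 - k) ≤ (m : ℝ) := by push_cast at this ⊢; linarith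
        _ ≤ |(m : ℝ)| := le_abs_self _
    · split <;> positivity
  · refine Summable.of_nonneg_of_le (fun m => by split <;> positivity) (fun m => ?_) hq
    split
    · exact le_refl _
    · positivity

lemma recip_support (N : ℕ) (k : ℤ) (hk : -(N:ℤ) ≤ k) :
    let e : ℕ → ℤ := fun n => (N : ℤ) + 1 + n
    Function.Injective e ∧
    (∀ n : ℕ, (fun j : ℤ => if (N : ℤ) < j then (|(j:ℝ)+(k:ℝ)|⁻¹)^2 else 0) (e n)
        = (((n:ℝ) + ((N:ℝ)+1+k))⁻¹)^2) := by
  intro e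
  constructor
  · intro m n h
    simp only [e] at h
    omega
  · intro n
    have hc : (N:ℤ) < e n := by simp only [e]; omega
    simp only [e, if_pos hc]
    have h1 : (0:ℝ) < ((N:ℝ)+1+(n:ℝ))+(k:ℝ) := by
      have : (1:ℤ) ≤ (N:ℤ)+1+n+k := by omega
      have h2 : ((1:ℤ):ℝ) ≤ (((N:ℤ)+1+n+k : ℤ):ℝ) := Int.cast_le.mpr this
      push_cast at h2; linarith
    push_cast
    rw [abs_of_pos h1]
    ring_nf

lemma recip_int (N : ℕ) (k : ℤ) (hk : -(N:ℤ) ≤ k) :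
    ∑' j : ℤ, (if (N : ℤ) < j then (|(j:ℝ)+(k:ℝ)|⁻¹)^2 else 0) ≤ 2/((N:ℝ)+1+(k:ℝ)) := by
  obtain ⟨hi, hv⟩ := recip_support N k hk
  have hc1 : (1:ℝ) ≤ (N:ℝ)+1+(k:ℝ) := by
    have : (1:ℤ) ≤ (N:ℤ)+1+k := by omega
    exact_mod_cast this
  have hs : Function.support (fun j : ℤ => if (N : ℤ) < j then (|(j:ℝ)+(k:ℝ)|⁻¹)^2 else 0)
      ⊆ Set.range (fun n : ℕ => (N : ℤ) + 1 + n) := by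
    intro j hj
    simp only [Function.mem_support] at hj
    by_cases h : (N:ℤ) < j
    · exact ⟨(j - (N+1)).toNat, by simp only []; omega⟩
    · exact absurd (if_neg h) hj
  rw [← Function.Injective.tsum_eq hi hs]
  calc ∑' n : ℕ, (fun j : ℤ => if (N : ℤ) < j then (|(j:ℝ)+(k:ℝ)|⁻¹)^2 else 0) ((N : ℤ) + 1 + n)
      = ∑' n : ℕ, (((n:ℝ) + ((N:ℝ)+1+k))⁻¹)^2 := by
        exact tsum_congr hv
    _ ≤ 2/((N:ℝ)+1+(k:ℝ)) := recip_nat hc1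

lemma summable_recip_int (N : ℕ) (k : ℤ) (hk : -(N:ℤ) ≤ k) :
    Summable (fun j : ℤ => if (N : ℤ) < j then (|(j:ℝ)+(k:ℝ)|⁻¹)^2 else 0) := by
  obtain ⟨hi, hv⟩ := recip_support N k hk
  have hc1 : (1:ℝ) ≤ (N:ℝ)+1+(k:ℝ) := by
    have : (1:ℤ) ≤ (N:ℤ)+1+k := by omega
    exact_mod_cast this
  have hs : Function.support (fun j : ℤ => if (N : ℤ) < j then (|(j:ℝ)+(k:ℝ)|⁻¹)^2 else 0)
      ⊆ Set.range (fun n : ℕ => (N : ℤ) + 1 + n) := by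
    intro j hj
    simp only [Function.mem_support] at hj
    by_cases h : (N:ℤ) < j
    · exact ⟨(j - (N+1)).toNat, by simp only []; omega⟩
    · exact absurd (if_neg h) hj
  refine (Function.Injective.summable_iff hi ?_).mp ?_
  · intro j hj
    by_contra hne
    exact hj (hs (Function.mem_support.mpr hne))
  · exact (summable_congr hv).mpr (summable_recip_nat hc1)

lemma ite_nonneg' {c : Prop} [Decidable c] {x : ℝ} (hx : 0 ≤ x) : 0 ≤ if c then x else 0 := by
  split
  · exact hx
  · exact le_refl 0

lemma fg_split (q : ℤ → ℂ) (N : ℕ) (k : ℤ) :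
    (∀ j : ℤ, (if (N : ℤ) < j then ‖q (j - k)‖ / |(j:ℝ)+(k:ℝ)| else 0)
      = (if (N : ℤ) < j then ‖q (j - k)‖ else 0)
        * (if (N : ℤ) < j then |(j:ℝ)+(k:ℝ)|⁻¹ else 0)) := by
  intro j
  split
  · rw [div_eq_mul_inv]
  · rw [mul_zero]

lemma f_sq_summable (q : ℤ → ℂ) (hq : Summable (fun k : ℤ => ‖q k‖ ^ 2)) (N : ℕ) (k : ℤ) : Summable (fun j : ℤ =>
    (if (N : ℤ) < j then ‖q (j - k)‖ else 0) ^ 2) := by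
  have hs : Summable (fun j : ℤ => ‖q (j - k)‖ ^ 2) :=
    ((Equiv.subRight k).summable_iff (f := fun m : ℤ => ‖q m‖ ^ 2)).mpr hq
  refine Summable.of_nonneg_of_le (fun j => by positivity) (fun j => ?_) hs
  split
  · exact le_refl _
  · rw [zero_pow two_ne_zero]; positivity

lemma g_sq_summable (N : ℕ) (k : ℤ) (hkl : -(N:ℤ) ≤ k) : Summable (fun j : ℤ =>
    (if (N : ℤ) < j then |(j:ℝ)+(k:ℝ)|⁻¹ else 0) ^ 2) := by
  have := summable_recip_int N k hkl
  refine (summable_congr (fun j => ?_)).mpr this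
  split
  · rfl
  · rw [zero_pow]; norm_num

lemma P_summable (q : ℤ → ℂ) (hq : Summable (fun k : ℤ => ‖q k‖ ^ 2)) (N : ℕ) (k : ℤ) (hkl : -(N:ℤ) ≤ k) :
    Summable (fun j : ℤ => if (N : ℤ) < j then ‖q (j - k)‖ / |(j:ℝ)+(k:ℝ)| else 0) := by
  refine (summable_congr (fg_split q N k)).mpr ?_
  exact summable_mul_of_sq (fun j => ite_nonneg' (by positivity))
    (fun j => ite_nonneg' (by positivity))
    (f_sq_summable q hq N k) (g_sq_summable N k hkl)

lemma P_bound (q : ℤ → ℂ) (hq : Summable (fun k : ℤ => ‖q k‖ ^ 2)) (N : ℕ) (k : ℤ) (hkl : -(N:ℤ) ≤ k) (hku : k ≤ (N:ℤ)) :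
    (∑' j : ℤ, if (N : ℤ) < j then ‖q (j - k)‖ / |(j:ℝ)+(k:ℝ)| else 0)
      ≤ tailE q ((N:ℝ)+1-(k:ℝ)) * Real.sqrt (2/((N:ℝ)+1+(k:ℝ))) := by
  rw [tsum_congr (fg_split q N k)]
  have hcs := tsum_cs (f := fun j : ℤ => if (N : ℤ) < j then ‖q (j - k)‖ else 0)
    (g := fun j : ℤ => if (N : ℤ) < j then |(j:ℝ)+(k:ℝ)|⁻¹ else 0)
    (fun j => ite_nonneg' (by positivity)) (fun j => ite_nonneg' (by positivity))
    (f_sq_summable q hq N k) (g_sq_summable N k hkl)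
  refine hcs.trans ?_
  have h1 : (∑' j : ℤ, (if (N : ℤ) < j then ‖q (j - k)‖ else 0) ^ 2)
      ≤ tailE q ((N:ℝ)+1-(k:ℝ)) ^ 2 := by
    have := qtail_bound q hq N k hku
    refine le_trans (le_of_eq (tsum_congr (fun j => ?_))) this
    split
    · rfl
    · rw [zero_pow]; norm_num
  have h2 : (∑' j : ℤ, (if (N : ℤ) < j then |(j:ℝ)+(k:ℝ)|⁻¹ else 0) ^ 2)
      ≤ 2/((N:ℝ)+1+(k:ℝ)) := by
    have := recip_int N k hkl
    refine le_trans (le_of_eq (tsum_congr (fun j => ?_))) this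
    split
    · rfl
    · rw [zero_pow]; norm_num
  have hE : Real.sqrt (tailE q ((N:ℝ)+1-(k:ℝ)) ^ 2) = tailE q ((N:ℝ)+1-(k:ℝ)) :=
    Real.sqrt_sq (tailE_nonneg q _)
  calc _ ≤ Real.sqrt (tailE q ((N:ℝ)+1-(k:ℝ)) ^ 2) * Real.sqrt (2/((N:ℝ)+1+(k:ℝ))) := by
        exact mul_le_mul (Real.sqrt_le_sqrt h1) (Real.sqrt_le_sqrt h2)
          (Real.sqrt_nonneg _) (Real.sqrt_nonneg _)
    _ = _ := by rw [hE]

lemma tailE_neg (q : ℤ → ℂ) (M : ℝ) : tailE (fun m => q (-m)) M = tailE q M := by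
  rw [tailE, tailE]
  congr 1
  rw [← (Equiv.neg ℤ).tsum_eq (fun k : ℤ => if M ≤ |(k : ℝ)| then ‖q k‖ ^ 2 else 0)]
  refine tsum_congr (fun m => ?_)
  simp only [Equiv.neg_apply]
  norm_num

lemma neg_summable (q : ℤ → ℂ) (hq : Summable (fun k : ℤ => ‖q k‖ ^ 2)) :
    Summable (fun k : ℤ => ‖(fun m => q (-m)) k‖ ^ 2) := by
  exact ((Equiv.neg ℤ).summable_iff (f := fun m : ℤ => ‖q m‖ ^ 2)).mpr hq

lemma M_eq (q : ℤ → ℂ) (N : ℕ) (k : ℤ) :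
    (∑' j : ℤ, if j < -(N:ℤ) then ‖q (j - k)‖ / |(j:ℝ)+(k:ℝ)| else 0)
      = ∑' j : ℤ, (if (N:ℤ) < j then ‖(fun m => q (-m)) (j - (-k))‖ / |(j:ℝ)+((-k : ℤ):ℝ)| else 0) := by
  rw [← (Equiv.neg ℤ).tsum_eq
    (fun j : ℤ => if j < -(N:ℤ) then ‖q (j - k)‖ / |(j:ℝ)+(k:ℝ)| else 0)]
  refine tsum_congr (fun j => ?_)
  simp only [Equiv.neg_apply]
  by_cases h : (N:ℤ) < j
  · rw [if_pos (by omega : -j < -(N:ℤ)), if_pos h]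
    have h1 : -j - k = -(j - -k) := by ring
    rw [h1]
    push_cast
    rw [← abs_neg]
    ring_nf
  · rw [if_neg (by omega : ¬ -j < -(N:ℤ)), if_neg h]

lemma M_bound (q : ℤ → ℂ) (hq : Summable (fun k : ℤ => ‖q k‖ ^ 2))
    (N : ℕ) (k : ℤ) (hkl : -(N:ℤ) ≤ k) (hku : k ≤ (N:ℤ)) :
    (∑' j : ℤ, if j < -(N:ℤ) then ‖q (j - k)‖ / |(j:ℝ)+(k:ℝ)| else 0)
      ≤ tailE q ((N:ℝ)+1+(k:ℝ)) * Real.sqrt (2/((N:ℝ)+1-(k:ℝ))) := by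
  rw [M_eq]
  have := P_bound (fun m => q (-m)) (neg_summable q hq) N (-k) (by omega) (by omega)
  refine this.trans (le_of_eq ?_)
  rw [tailE_neg]
  push_cast
  ring_nf

lemma M_summable (q : ℤ → ℂ) (hq : Summable (fun k : ℤ => ‖q k‖ ^ 2))
    (N : ℕ) (k : ℤ) (hku : k ≤ (N:ℤ)) :
    Summable (fun j : ℤ => if j < -(N:ℤ) then ‖q (j - k)‖ / |(j:ℝ)+(k:ℝ)| else 0) := by
  have hs := P_summable (fun m => q (-m)) (neg_summable q hq) N (-k) (by omega)
  have := ((Equiv.neg ℤ).summable_iff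
    (f := fun j : ℤ => if j < -(N:ℤ) then ‖q (j - k)‖ / |(j:ℝ)+(k:ℝ)| else 0))
  refine this.mp ?_
  refine (summable_congr (fun j => ?_)).mpr hs
  simp only [Equiv.neg_apply, Function.comp]
  by_cases h : (N:ℤ) < j
  · rw [if_pos h, if_pos (by omega : -j < -(N:ℤ))]
    have h1 : -j - k = -(j - -k) := by ring
    rw [h1]
    push_cast
    rw [← abs_neg]
    ring_nf
  · rw [if_neg h, if_neg (by omega : ¬ -j < -(N:ℤ))]

lemma T_bound (q : ℤ → ℂ) (hq : Summable (fun k : ℤ => ‖q k‖ ^ 2))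
    (N : ℕ) (k : ℤ) (hkl : -(N:ℤ) ≤ k) (hku : k ≤ (N:ℤ)) :
    (∑' j : ℤ, if (N : ℤ) < |j| then ‖q (j - k)‖ / |(j : ℝ) + (k : ℝ)| else 0)
      ≤ tailE q ((N:ℝ)+1-(k:ℝ)) * Real.sqrt (2/((N:ℝ)+1+(k:ℝ)))
        + tailE q ((N:ℝ)+1+(k:ℝ)) * Real.sqrt (2/((N:ℝ)+1-(k:ℝ))) := by
  have hsplit : ∀ j : ℤ,
      (if (N : ℤ) < |j| then ‖q (j - k)‖ / |(j : ℝ) + (k : ℝ)| else 0)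
      = (if (N : ℤ) < j then ‖q (j - k)‖ / |(j : ℝ) + (k : ℝ)| else 0)
        + (if j < -(N:ℤ) then ‖q (j - k)‖ / |(j : ℝ) + (k : ℝ)| else 0) := by
    intro j
    by_cases h1 : (N : ℤ) < j
    · rw [if_pos (lt_abs.mpr (Or.inl h1)), if_pos h1, if_neg (by omega : ¬ j < -(N:ℤ)), add_zero]
    · by_cases h2 : j < -(N:ℤ)
      · rw [if_pos (lt_abs.mpr (Or.inr (by omega))), if_neg h1, if_pos h2, zero_add]
      · rw [if_neg (by rw [lt_abs]; push_neg; omega), if_neg h1, if_neg h2, add_zero]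
  rw [tsum_congr hsplit, Summable.tsum_add (P_summable q hq N k hkl) (M_summable q hq N k hku)]
  exact add_le_add (P_bound q hq N k hkl hku) (M_bound q hq N k hkl hku)

lemma rpow_add_le4 {x y a : ℝ} (hx : 0 ≤ x) (hy : 0 ≤ y) (ha1 : 1 ≤ a) (ha2 : a ≤ 2) :
    (x + y) ^ a ≤ 4 * (x ^ a + y ^ a) := by
  have ha0 : 0 ≤ a := le_trans zero_le_one ha1
  have hm : 0 ≤ max x y := le_max_of_le_left hx
  have h1 : x + y ≤ 2 * max x y := by
    rcases le_total x y with h | h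
    · rw [max_eq_right h]; linarith
    · rw [max_eq_left h]; linarith
  calc (x + y) ^ a ≤ (2 * max x y) ^ a := Real.rpow_le_rpow (by linarith [hx, hy]) h1 ha0
    _ = 2 ^ a * (max x y) ^ a := Real.mul_rpow (by norm_num) hm
    _ ≤ 4 * (max x y) ^ a := by
        have h2 : (2:ℝ) ^ a ≤ 2 ^ (2:ℝ) := Real.rpow_le_rpow_of_exponent_le one_le_two ha2
        have h4 : (2:ℝ) ^ (2:ℝ) = 4 := by
          rw [show (2:ℝ) = ((2:ℕ):ℝ) by norm_num, Real.rpow_natCast]; norm_num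
        have := Real.rpow_nonneg hm a
        nlinarith
    _ ≤ 4 * (x ^ a + y ^ a) := by
        have hxa := Real.rpow_nonneg hx a
        have hya := Real.rpow_nonneg hy a
        rcases le_total x y with h | h
        · rw [max_eq_right h]; linarith
        · rw [max_eq_left h]; linarith

lemma sqrt_div_rpow {a : ℝ} (ha1 : 1 ≤ a) (ha2 : a ≤ 2) {m : ℝ} (hm : 1 ≤ m) :
    Real.sqrt (2 / m) ^ a ≤ 2 * m ^ (-(a / 2)) := by
  have hm0 : (0:ℝ) < m := lt_of_lt_of_le one_pos hm
  have hdm : (0:ℝ) ≤ 2 / m := by positivity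
  rw [Real.sqrt_eq_rpow, ← Real.rpow_mul hdm, show (1:ℝ)/2*a = a/2 by ring]
  rw [show (2:ℝ)/m = 2 * m⁻¹ by ring, Real.mul_rpow (by norm_num) (by positivity)]
  have h2 : (2:ℝ) ^ (a/2) ≤ 2 := by
    have := Real.rpow_le_rpow_of_exponent_le one_le_two (by linarith : a/2 ≤ (1:ℝ))
    rwa [Real.rpow_one] at this
  have h3 : m⁻¹ ^ (a/2) = m ^ (-(a/2)) := by
    rw [← Real.rpow_neg_one m, ← Real.rpow_mul (le_of_lt hm0)]
    norm_num
  rw [h3]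
  have h4 : (0:ℝ) ≤ m ^ (-(a/2)) := Real.rpow_nonneg (le_of_lt hm0) _
  nlinarith

lemma master (a : ℝ) (ha1 : 1 ≤ a) (ha2 : a ≤ 2) (q : ℤ → ℂ)
    (hq : Summable (fun k : ℤ => ‖q k‖ ^ 2)) (N : ℕ) (hN : 2 ≤ N) :
    sigma1 q a N ≤ 16 * ((N:ℝ) ^ (-(a/2)) * ∑ i ∈ Finset.range (N+1), tailE q ((N:ℝ)+1-i) ^ a)
      + 16 * (tailE q N ^ a * ∑ i ∈ Finset.range N, ((i:ℝ)+1) ^ (-(a/2))) := by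
  have ha0 : (0:ℝ) ≤ a := by linarith
  have hN1 : (1:ℝ) ≤ (N:ℝ) := by exact_mod_cast Nat.one_le_of_lt hN
  set u : ℤ → ℝ := fun k => tailE q ((N:ℝ)+1-(k:ℝ)) * Real.sqrt (2/((N:ℝ)+1+(k:ℝ))) with hu
  set v : ℤ → ℝ := fun k => tailE q ((N:ℝ)+1+(k:ℝ)) * Real.sqrt (2/((N:ℝ)+1-(k:ℝ))) with hv
  have hu0 : ∀ k, 0 ≤ u k := fun k => mul_nonneg (tailE_nonneg q _) (Real.sqrt_nonneg _)
  have hv0 : ∀ k, 0 ≤ v k := fun k => mul_nonneg (tailE_nonneg q _) (Real.sqrt_nonneg _)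
  have step1 : sigma1 q a N ≤ ∑ k ∈ Finset.Icc (-(N:ℤ)) (N:ℤ), (u k + v k) ^ a := by
    refine Finset.sum_le_sum (fun k hk => ?_)
    rw [Finset.mem_Icc] at hk
    refine Real.rpow_le_rpow (tsum_nonneg (fun j => ite_nonneg' (by positivity))) ?_ ha0
    exact T_bound q hq N k hk.1 hk.2
  have step2 : ∑ k ∈ Finset.Icc (-(N:ℤ)) (N:ℤ), (u k + v k) ^ a
      ≤ ∑ k ∈ Finset.Icc (-(N:ℤ)) (N:ℤ), (4 * (u k ^ a + v k ^ a)) :=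
    Finset.sum_le_sum (fun k _ => rpow_add_le4 (hu0 k) (hv0 k) ha1 ha2)
  have hvu : ∑ k ∈ Finset.Icc (-(N:ℤ)) (N:ℤ), v k ^ a
      = ∑ k ∈ Finset.Icc (-(N:ℤ)) (N:ℤ), u k ^ a := by
    refine Finset.sum_nbij' (fun k => -k) (fun k => -k) ?_ ?_ ?_ ?_ ?_
    · intro k hk; simp only [Finset.mem_Icc] at hk ⊢; omega
    · intro k hk; simp only [Finset.mem_Icc] at hk ⊢; omega
    · intro k _; simp
    · intro k _; simp
    · intro k _
      have : u (-k) = v k := by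
        rw [hu, hv]
        push_cast
        ring_nf
      rw [this]
  have step3 : sigma1 q a N ≤ 8 * ∑ k ∈ Finset.Icc (-(N:ℤ)) (N:ℤ), u k ^ a := by
    calc sigma1 q a N ≤ _ := step1.trans step2
      _ = 4 * (∑ k ∈ Finset.Icc (-(N:ℤ)) (N:ℤ), u k ^ a)
          + 4 * (∑ k ∈ Finset.Icc (-(N:ℤ)) (N:ℤ), v k ^ a) := by
        rw [← Finset.mul_sum, Finset.sum_add_distrib, mul_add]
      _ = 8 * ∑ k ∈ Finset.Icc (-(N:ℤ)) (N:ℤ), u k ^ a := by rw [hvu]; ring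
  have hsplitI : Finset.Icc (-(N:ℤ)) (N:ℤ)
      = Finset.Icc (-(N:ℤ)) (-1) ∪ Finset.Icc 0 (N:ℤ) := by
    ext x; simp only [Finset.mem_union, Finset.mem_Icc]; omega
  have hdisj : Disjoint (Finset.Icc (-(N:ℤ)) (-1)) (Finset.Icc 0 (N:ℤ)) := by
    rw [Finset.disjoint_left]
    intro x hx hx'
    rw [Finset.mem_Icc] at hx hx'
    omega
  have hplus : ∑ k ∈ Finset.Icc (0:ℤ) (N:ℤ), u k ^ a
      ≤ 2 * ((N:ℝ) ^ (-(a/2)) * ∑ i ∈ Finset.range (N+1), tailE q ((N:ℝ)+1-i) ^ a) := by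
    have hper : ∀ k ∈ Finset.Icc (0:ℤ) (N:ℤ),
        u k ^ a ≤ tailE q ((N:ℝ)+1-(k:ℝ)) ^ a * (2 * (N:ℝ) ^ (-(a/2))) := by
      intro k hk
      rw [Finset.mem_Icc] at hk
      have hk0 : (0:ℝ) ≤ (k:ℝ) := by exact_mod_cast hk.1
      have h1 : u k ≤ tailE q ((N:ℝ)+1-(k:ℝ)) * Real.sqrt (2/(N:ℝ)) := by
        refine mul_le_mul_of_nonneg_left ?_ (tailE_nonneg q _)
        refine Real.sqrt_le_sqrt ?_
        refine div_le_div_of_nonneg_left (by norm_num) (by linarith) (by linarith)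
      calc u k ^ a ≤ (tailE q ((N:ℝ)+1-(k:ℝ)) * Real.sqrt (2/(N:ℝ))) ^ a :=
            Real.rpow_le_rpow (hu0 k) h1 ha0
        _ = tailE q ((N:ℝ)+1-(k:ℝ)) ^ a * Real.sqrt (2/(N:ℝ)) ^ a :=
            Real.mul_rpow (tailE_nonneg q _) (Real.sqrt_nonneg _)
        _ ≤ tailE q ((N:ℝ)+1-(k:ℝ)) ^ a * (2 * (N:ℝ) ^ (-(a/2))) := by
            refine mul_le_mul_of_nonneg_left ?_ (Real.rpow_nonneg (tailE_nonneg q _) a)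
            exact sqrt_div_rpow ha1 ha2 hN1
    calc ∑ k ∈ Finset.Icc (0:ℤ) (N:ℤ), u k ^ a
        ≤ ∑ k ∈ Finset.Icc (0:ℤ) (N:ℤ), tailE q ((N:ℝ)+1-(k:ℝ)) ^ a * (2 * (N:ℝ) ^ (-(a/2))) :=
          Finset.sum_le_sum hper
      _ = (∑ k ∈ Finset.Icc (0:ℤ) (N:ℤ), tailE q ((N:ℝ)+1-(k:ℝ)) ^ a) * (2 * (N:ℝ) ^ (-(a/2))) :=
          (Finset.sum_mul _ _ _).symm
      _ = (∑ i ∈ Finset.range (N+1), tailE q ((N:ℝ)+1-(i:ℝ)) ^ a) * (2 * (N:ℝ) ^ (-(a/2))) := by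
          congr 1
          refine Finset.sum_nbij' (fun k => k.toNat) (fun i => (i:ℤ)) ?_ ?_ ?_ ?_ ?_
          · intro k hk; simp only [Finset.mem_Icc] at hk; simp only [Finset.mem_range]; omega
          · intro i hi; simp only [Finset.mem_range] at hi; simp only [Finset.mem_Icc]; omega
          · intro k hk; simp only [Finset.mem_Icc] at hk; beta_reduce; omega
          · intro i _; simp
          · intro k hk
            rw [Finset.mem_Icc] at hk
            congr 2
            have h1 : ((k.toNat:ℕ):ℝ) = (k:ℝ) := by exact_mod_cast Int.toNat_of_nonneg hk.1
            rw [h1]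
      _ = 2 * ((N:ℝ) ^ (-(a/2)) * ∑ i ∈ Finset.range (N+1), tailE q ((N:ℝ)+1-(i:ℝ)) ^ a) := by
          ring
  have hminus : ∑ k ∈ Finset.Icc (-(N:ℤ)) (-1:ℤ), u k ^ a
      ≤ 2 * (tailE q N ^ a * ∑ i ∈ Finset.range N, ((i:ℝ)+1) ^ (-(a/2))) := by
    have hper : ∀ k ∈ Finset.Icc (-(N:ℤ)) (-1:ℤ),
        u k ^ a ≤ tailE q N ^ a * (2 * ((N:ℝ)+1+(k:ℝ)) ^ (-(a/2))) := by
      intro k hk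
      rw [Finset.mem_Icc] at hk
      have hm1 : (1:ℝ) ≤ (N:ℝ)+1+(k:ℝ) := by
        have h1 : (1:ℤ) ≤ (N:ℤ)+1+k := by omega
        have h2 : ((1:ℤ):ℝ) ≤ (((N:ℤ)+1+k : ℤ):ℝ) := Int.cast_le.mpr h1
        push_cast at h2; linarith
      have h1 : u k ≤ tailE q N * Real.sqrt (2/((N:ℝ)+1+(k:ℝ))) := by
        refine mul_le_mul_of_nonneg_right ?_ (Real.sqrt_nonneg _)
        refine tailE_mono q hq ?_
        have : (k:ℝ) ≤ -1 := by exact_mod_cast hk.2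
        linarith
      calc u k ^ a ≤ (tailE q N * Real.sqrt (2/((N:ℝ)+1+(k:ℝ)))) ^ a :=
            Real.rpow_le_rpow (hu0 k) h1 ha0
        _ = tailE q N ^ a * Real.sqrt (2/((N:ℝ)+1+(k:ℝ))) ^ a :=
            Real.mul_rpow (tailE_nonneg q _) (Real.sqrt_nonneg _)
        _ ≤ tailE q N ^ a * (2 * ((N:ℝ)+1+(k:ℝ)) ^ (-(a/2))) := by
            refine mul_le_mul_of_nonneg_left ?_ (Real.rpow_nonneg (tailE_nonneg q _) a)
            exact sqrt_div_rpow ha1 ha2 hm1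
    calc ∑ k ∈ Finset.Icc (-(N:ℤ)) (-1:ℤ), u k ^ a
        ≤ ∑ k ∈ Finset.Icc (-(N:ℤ)) (-1:ℤ), tailE q N ^ a * (2 * ((N:ℝ)+1+(k:ℝ)) ^ (-(a/2))) :=
          Finset.sum_le_sum hper
      _ = tailE q N ^ a * (2 * ∑ k ∈ Finset.Icc (-(N:ℤ)) (-1:ℤ), ((N:ℝ)+1+(k:ℝ)) ^ (-(a/2))) := by
          rw [← Finset.mul_sum, ← Finset.mul_sum]
      _ = tailE q N ^ a * (2 * ∑ i ∈ Finset.range N, ((i:ℝ)+1) ^ (-(a/2))) := by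
          congr 2
          refine Finset.sum_nbij' (fun k => (k + N).toNat) (fun i => (i:ℤ) - N) ?_ ?_ ?_ ?_ ?_
          · intro k hk; simp only [Finset.mem_Icc] at hk; simp only [Finset.mem_range]; omega
          · intro i hi; simp only [Finset.mem_range] at hi; simp only [Finset.mem_Icc]; omega
          · intro k hk; simp only [Finset.mem_Icc] at hk; beta_reduce; omega
          · intro i _; simp
          · intro k hk
            rw [Finset.mem_Icc] at hk
            congr 1
            have h0 : (0:ℤ) ≤ k + N := by omega
            have : (((k + (N:ℤ)).toNat : ℕ) : ℝ) = (k:ℝ) + (N:ℝ) := by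
              rw [← Int.cast_natCast, Int.toNat_of_nonneg h0]; push_cast; ring
            rw [this]; ring
      _ = 2 * (tailE q N ^ a * ∑ i ∈ Finset.range N, ((i:ℝ)+1) ^ (-(a/2))) := by ring
  calc sigma1 q a N ≤ 8 * ∑ k ∈ Finset.Icc (-(N:ℤ)) (N:ℤ), u k ^ a := step3
    _ = 8 * (∑ k ∈ Finset.Icc (-(N:ℤ)) (-1:ℤ), u k ^ a + ∑ k ∈ Finset.Icc (0:ℤ) (N:ℤ), u k ^ a) := by
        rw [hsplitI, Finset.sum_union hdisj]
    _ ≤ 8 * (2 * (tailE q N ^ a * ∑ i ∈ Finset.range N, ((i:ℝ)+1) ^ (-(a/2)))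
          + 2 * ((N:ℝ) ^ (-(a/2)) * ∑ i ∈ Finset.range (N+1), tailE q ((N:ℝ)+1-i) ^ a)) := by
        have := add_le_add hminus hplus
        linarith
    _ = _ := by ring

lemma Hlt (a : ℝ) (ha1 : 1 ≤ a) (ha2 : a < 2) (N : ℕ) (hN : 2 ≤ N) :
    ∑ i ∈ Finset.range N, ((i:ℝ)+1) ^ (-(a/2)) ≤ (1 + (1-a/2)⁻¹) * (N:ℝ) ^ (1-a/2) := by
  have hb0 : (0:ℝ) < a/2 := by linarith
  have hb1 : a/2 < 1 := by linarith
  have hN1 : (1:ℝ) ≤ (N:ℝ) := by exact_mod_cast Nat.one_le_of_lt hN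
  have hA : AntitoneOn (fun x : ℝ => x ^ (-(a/2))) (Set.Icc 1 (1 + ((N-1:ℕ):ℝ))) := by
    intro x hx y hy hxy
    simp only
    rw [Real.rpow_neg (by linarith [hx.1] : (0:ℝ) ≤ x),
      Real.rpow_neg (by linarith [hx.1, hxy] : (0:ℝ) ≤ y)]
    refine inv_anti₀ (Real.rpow_pos_of_pos (by linarith [hx.1]) _) ?_
    exact Real.rpow_le_rpow (by linarith [hx.1]) hxy (by linarith)
  have hint := hA.sum_le_integral
  have hcast : (1:ℝ) + ((N-1:ℕ):ℝ) = (N:ℝ) := by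
    have : (1:ℕ) ≤ N := by omega
    push_cast [Nat.cast_sub this]
    ring
  have hval : ∫ x in (1:ℝ)..(1 + ((N-1:ℕ):ℝ)), x ^ (-(a/2))
      = ((N:ℝ) ^ (1-a/2) - 1) / (1-a/2) := by
    rw [hcast, integral_rpow (Or.inl (by linarith : (-1:ℝ) < -(a/2)))]
    rw [Real.one_rpow]
    norm_num
    rw [show -(a/2)+1 = 1-a/2 by ring]
  have hsum : ∑ i ∈ Finset.range N, ((i:ℝ)+1) ^ (-(a/2))
      = (∑ i ∈ Finset.range (N-1), (fun x : ℝ => x ^ (-(a/2))) (1 + ((i+1:ℕ):ℝ))) + 1 := by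
    have hN' : N = (N-1) + 1 := by omega
    rw [hN', Finset.sum_range_succ']
    congr 1
    · refine Finset.sum_congr rfl (fun i _ => ?_)
      congr 1
      push_cast
      ring
    · norm_num
  have hone : (1:ℝ) ≤ (N:ℝ) ^ (1-a/2) := by
    have := Real.rpow_le_rpow (by norm_num : (0:ℝ) ≤ 1) hN1 (by linarith : (0:ℝ) ≤ 1-a/2)
    rwa [Real.one_rpow] at this
  calc ∑ i ∈ Finset.range N, ((i:ℝ)+1) ^ (-(a/2))
      ≤ (((N:ℝ) ^ (1-a/2) - 1) / (1-a/2)) + 1 := by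
        rw [hsum]
        have := hint
        rw [hval] at this
        linarith [this]
    _ ≤ (1 + (1-a/2)⁻¹) * (N:ℝ) ^ (1-a/2) := by
        have hpos : (0:ℝ) < 1-a/2 := by linarith
        rw [div_eq_mul_inv]
        have hinv : (0:ℝ) < (1-a/2)⁻¹ := by positivity
        nlinarith

lemma Heq (N : ℕ) (hN : 2 ≤ N) :
    ∑ i ∈ Finset.range N, ((i:ℝ)+1) ^ (-(1:ℝ)) ≤ 3 * Real.log N := by
  have h1 : ∑ i ∈ Finset.range N, ((i:ℝ)+1) ^ (-(1:ℝ)) = ((harmonic N : ℚ) : ℝ) := by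
    rw [harmonic]
    push_cast
    refine Finset.sum_congr rfl (fun i _ => ?_)
    rw [Real.rpow_neg_one]
  have h2 := harmonic_le_one_add_log N
  have h3 : Real.log 2 ≤ Real.log N := by
    refine Real.log_le_log (by norm_num) ?_
    exact_mod_cast hN
  have h4 := Real.log_two_gt_d9
  rw [h1]
  linarith

theorem stmt14 (a : ℝ) (ha1 : 1 ≤ a) (ha2 : a ≤ 2) :
    ∃ C : ℝ, 0 < C ∧ ∀ q : ℤ → ℂ, Summable (fun k : ℤ => ‖q k‖ ^ 2) →
      ∀ N : ℕ, 2 ≤ N →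
        (a < 2 → sigma1 q a N ≤
          C * ((N : ℝ) ^ (-(a / 2)) *
              ∑ k ∈ Finset.range (N + 1), tailE q ((N : ℝ) + 1 - k) ^ a +
            tailE q N ^ a * (N : ℝ) ^ (1 - a / 2))) ∧
        (a = 2 → sigma1 q 2 N ≤
          C * ((N : ℝ)⁻¹ *
              ∑ k ∈ Finset.range (N + 1), tailE q ((N : ℝ) + 1 - k) ^ (2 : ℕ) +
            tailE q N ^ (2 : ℕ) * Real.log N)) := by
  have hinv0 : (0:ℝ) ≤ (1 - a/2)⁻¹ := by
    rcases lt_or_eq_of_le ha2 with h | h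
    · have : (0:ℝ) < 1 - a/2 := by linarith
      positivity
    · rw [h]; norm_num
  refine ⟨49 + 16 * (1 - a/2)⁻¹, by linarith, fun q hq N hN => ⟨fun hlt => ?_, fun heq => ?_⟩⟩
  · -- a < 2
    have hm := master a ha1 ha2 q hq N hN
    have hH := Hlt a ha1 hlt N hN
    set X := (N:ℝ) ^ (-(a/2)) * ∑ k ∈ Finset.range (N+1), tailE q ((N:ℝ)+1-k) ^ a with hX
    set Y := tailE q N ^ a * (N:ℝ) ^ (1-a/2) with hY
    have hX0 : 0 ≤ X := by
      refine mul_nonneg (Real.rpow_nonneg (Nat.cast_nonneg N) _) ?_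
      exact Finset.sum_nonneg (fun i _ => Real.rpow_nonneg (tailE_nonneg q _) _)
    have hY0 : 0 ≤ Y := mul_nonneg (Real.rpow_nonneg (tailE_nonneg q _) _)
      (Real.rpow_nonneg (Nat.cast_nonneg N) _)
    have hEa : (0:ℝ) ≤ tailE q N ^ a := Real.rpow_nonneg (tailE_nonneg q _) _
    have step : sigma1 q a N ≤ 16 * X + 16 * (1 + (1-a/2)⁻¹) * Y := by
      refine hm.trans ?_
      have h5 : tailE q N ^ a * ∑ i ∈ Finset.range N, ((i:ℝ)+1) ^ (-(a/2))
          ≤ tailE q N ^ a * ((1 + (1-a/2)⁻¹) * (N:ℝ) ^ (1-a/2)) :=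
        mul_le_mul_of_nonneg_left hH hEa
      rw [hY]
      nlinarith
    refine step.trans ?_
    have c1 : (16:ℝ) ≤ 49 + 16 * (1 - a/2)⁻¹ := by linarith
    have c2 : 16 * (1 + (1-a/2)⁻¹) ≤ 49 + 16 * (1 - a/2)⁻¹ := by linarith
    nlinarith
  · -- a = 2
    subst heq
    have hm := master 2 (by norm_num) (by norm_num) q hq N hN
    have he1 : (-((2:ℝ)/2)) = (-1:ℝ) := by norm_num
    have he2 : (1 - (2:ℝ)/2) = (0:ℝ) := by norm_num
    rw [he1] at hm
    have hrn : (N:ℝ) ^ (-1:ℝ) = (N:ℝ)⁻¹ := Real.rpow_neg_one _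
    rw [hrn] at hm
    have hpow : ∀ x : ℝ, x ^ (2:ℝ) = x ^ (2:ℕ) := fun x => by
      rw [← Real.rpow_natCast x 2]; norm_num
    rw [hpow] at hm
    have hsumeq : ∑ i ∈ Finset.range (N+1), tailE q ((N:ℝ)+1-i) ^ (2:ℝ)
        = ∑ i ∈ Finset.range (N+1), tailE q ((N:ℝ)+1-i) ^ (2:ℕ) :=
      Finset.sum_congr rfl (fun i _ => hpow _)
    rw [hsumeq] at hm
    have hH := Heq N hN
    have hE2 : (0:ℝ) ≤ tailE q N ^ (2:ℕ) := by positivity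
    have hX0 : (0:ℝ) ≤ (N:ℝ)⁻¹ * ∑ i ∈ Finset.range (N+1), tailE q ((N:ℝ)+1-i) ^ (2:ℕ) := by
      refine mul_nonneg (by positivity) ?_
      exact Finset.sum_nonneg (fun i _ => by positivity)
    have hlog : (0:ℝ) ≤ Real.log N := by
      refine Real.log_nonneg ?_
      exact_mod_cast Nat.one_le_of_lt hN
    have step : sigma1 q 2 N ≤ 16 * ((N:ℝ)⁻¹ * ∑ i ∈ Finset.range (N+1), tailE q ((N:ℝ)+1-i) ^ (2:ℕ))
        + 48 * (tailE q N ^ (2:ℕ) * Real.log N) := by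
      refine hm.trans ?_
      have h5 : tailE q N ^ (2:ℕ) * ∑ i ∈ Finset.range N, ((i:ℝ)+1) ^ (-(1:ℝ))
          ≤ tailE q N ^ (2:ℕ) * (3 * Real.log N) := mul_le_mul_of_nonneg_left hH hE2
      nlinarith
    refine step.trans ?_
    have hY0 : (0:ℝ) ≤ tailE q N ^ (2:ℕ) * Real.log N := mul_nonneg hE2 hlog
    nlinarith [hinv0, hX0, hY0]
end
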